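/- arXiv:1604.03448 — 6 statements merged into one kernel-verified Lean document; each statement's English description precedes it below -/
import Mathlib

section
/- Separable inputs do not increase the channel max-relative entropy of entanglement: Let T : M_{d_{A'}}(ℂ) → M_{d_{B'}}(ℂ) be a quantum channel and let σ_{AA'B} be a density matrix on ℂ^{d_A} ⊗ ℂ^{d_{A'}} ⊗ ℂ^{d_B} that is separable w.r.t. the bipartition AA' : B. Then E_max^{A:B'B}((id_A ⊗ T ⊗ id_B)(σ_{AA'B})) ≤ E_max(T), where the output state on ℂ^{d_A} ⊗ ℂ^{d_{B'}} ⊗ ℂ^{d_B} is measured across the bipartition A : B'B. -/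
open Matrix
open scoped Kronecker ComplexOrder
attribute [local instance] Classical.propDecidable

noncomputable section

/-- Real power of a Hermitian matrix via the continuous functional calculus
(with the Moore–Penrose convention `0 ^ r = 0` for `r ≠ 0`). -/
def matRPow {n : Type*} [Fintype n] [DecidableEq n] (A : Matrix n n ℂ) (r : ℝ) :
    Matrix n n ℂ :=
  cfc (fun x : ℝ => x ^ r) A

/-- Base-2 matrix logarithm via the continuous functional calculus. -/
def matLog2 {n : Type*} [Fintype n] [DecidableEq n] (A : Matrix n n ℂ) : Matrix n n ℂ :=
  cfc (fun x : ℝ => Real.logb 2 x) A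

/-- A density matrix: positive semidefinite with unit trace. -/
def IsState {n : Type*} [Fintype n] (ρ : Matrix n n ℂ) : Prop :=
  ρ.PosSemidef ∧ ρ.trace = 1

/-- The sandwiched α-Rényi divergence
`D_α(ρ‖σ) = (α−1)⁻¹ · log₂ tr[(σ^((1−α)/(2α)) ρ σ^((1−α)/(2α)))^α]`. -/
def sandwichedRenyi {n : Type*} [Fintype n] [DecidableEq n] (α : ℝ) (ρ σ : Matrix n n ℂ) : ℝ :=
  (α - 1)⁻¹ *
    Real.logb 2
      (matRPow (matRPow σ ((1 - α) / (2 * α)) * ρ * matRPow σ ((1 - α) / (2 * α))) α).trace.re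

/-- The Umegaki relative entropy `D(ρ‖σ) = tr[ρ log₂ ρ] − tr[ρ log₂ σ]`. -/
def relEnt {n : Type*} [Fintype n] [DecidableEq n] (ρ σ : Matrix n n ℂ) : ℝ :=
  ((ρ * matLog2 ρ).trace - (ρ * matLog2 σ).trace).re

/-- The max-relative entropy `D_max(ρ‖σ) = log₂ inf{c > 0 : c·σ − ρ ⪰ 0}` (with value `⊤`
if no such `c` exists). -/
def Dmax {n : Type*} [Fintype n] (ρ σ : Matrix n n ℂ) : EReal :=
  ⨅ c : {c : ℝ // 0 < c ∧ ((c : ℝ) • σ - ρ).PosSemidef}, ((Real.logb 2 (c : ℝ) : ℝ) : EReal)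

/-- Support inclusion for positive semidefinite matrices, expressed as domination:
`supp ρ ⊆ supp σ` iff `ρ ≤ c·σ` for some `c > 0`. -/
def supportLe {n : Type*} [Fintype n] (ρ σ : Matrix n n ℂ) : Prop :=
  ∃ c : ℝ, 0 < c ∧ ((c : ℝ) • σ - ρ).PosSemidef

/-- Extended-real-valued sandwiched α-Rényi divergence, `⊤` if the support condition fails. -/
def DalphaE {n : Type*} [Fintype n] [DecidableEq n] (α : ℝ) (ρ σ : Matrix n n ℂ) : EReal :=
  if supportLe ρ σ then ((sandwichedRenyi α ρ σ : ℝ) : EReal) else ⊤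

/-- Extended-real-valued Umegaki relative entropy, `⊤` if the support condition fails. -/
def DrelE {n : Type*} [Fintype n] [DecidableEq n] (ρ σ : Matrix n n ℂ) : EReal :=
  if supportLe ρ σ then ((relEnt ρ σ : ℝ) : EReal) else ⊤

/-- Separability of a bipartite state w.r.t. the bipartition given by the product index. -/
def IsSepState {A B : Type*} [Fintype A] [Fintype B]
    (σ : Matrix (A × B) (A × B) ℂ) : Prop :=
  ∃ (k : ℕ) (p : Fin k → ℝ) (τ₁ : Fin k → Matrix A A ℂ) (τ₂ : Fin k → Matrix B B ℂ),
    (∀ i, 0 ≤ p i) ∧ (∑ i, p i = 1) ∧ (∀ i, IsState (τ₁ i)) ∧ (∀ i, IsState (τ₂ i)) ∧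
      σ = ∑ i, (p i : ℂ) • (τ₁ i ⊗ₖ τ₂ i)

/-- The max-relative entropy of entanglement of a bipartite state. -/
def EmaxState {A B : Type*} [Fintype A] [Fintype B]
    (ρ : Matrix (A × B) (A × B) ℂ) : EReal :=
  ⨅ σ : {σ : Matrix (A × B) (A × B) ℂ // IsSepState σ}, Dmax ρ (σ : Matrix (A × B) (A × B) ℂ)

/-- The α-relative entropy of entanglement of a bipartite state. -/
def EalphaState {A B : Type*} [Fintype A] [Fintype B] [DecidableEq A] [DecidableEq B]
    (α : ℝ) (ρ : Matrix (A × B) (A × B) ℂ) : EReal :=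
  ⨅ σ : {σ : Matrix (A × B) (A × B) ℂ // IsSepState σ}, DalphaE α ρ (σ : Matrix (A × B) (A × B) ℂ)

/-- The relative entropy of entanglement of a bipartite state. -/
def ERState {A B : Type*} [Fintype A] [Fintype B] [DecidableEq A] [DecidableEq B]
    (ρ : Matrix (A × B) (A × B) ℂ) : EReal :=
  ⨅ σ : {σ : Matrix (A × B) (A × B) ℂ // IsSepState σ}, DrelE ρ (σ : Matrix (A × B) (A × B) ℂ)

/-- Partial application `id_R ⊗ T` of a map `T` to the second tensor factor. -/
def applyRight {R A B : Type*} (T : Matrix A A ℂ → Matrix B B ℂ)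
    (ρ : Matrix (R × A) (R × A) ℂ) : Matrix (R × B) (R × B) ℂ :=
  Matrix.of fun x y => T (Matrix.of fun a a' => ρ (x.1, a) (y.1, a')) x.2 y.2

/-- Partial application `id_R ⊗ T ⊗ id_S` of a map `T` to the middle tensor factor. -/
def applyMiddle {R A B S : Type*} (T : Matrix A A ℂ → Matrix B B ℂ)
    (ρ : Matrix (R × A × S) (R × A × S) ℂ) : Matrix (R × B × S) (R × B × S) ℂ :=
  Matrix.of fun x y => T (Matrix.of fun a a' => ρ (x.1, a, x.2.2) (y.1, a', y.2.2)) x.2.1 y.2.1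

/-- Regroup a tripartite index `A × (B × C)` as `(A × B) × C`. -/
def assocL {A B C : Type*} (ρ : Matrix (A × B × C) (A × B × C) ℂ) :
    Matrix ((A × B) × C) ((A × B) × C) ℂ :=
  ρ.submatrix (Equiv.prodAssoc A B C) (Equiv.prodAssoc A B C)

/-- The (normalized) Choi matrix `(id ⊗ T)(ω)` of a linear map `T`. -/
def choi {A B : Type*} [Fintype A] [DecidableEq A] (T : Matrix A A ℂ → Matrix B B ℂ) :
    Matrix (A × B) (A × B) ℂ :=
  Matrix.of fun x y => ((Fintype.card A : ℂ))⁻¹ * T (Matrix.single x.1 y.1 1) x.2 y.2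

/-- A quantum channel: linear, trace-preserving and completely positive
(the latter expressed by positive semidefiniteness of the Choi matrix). -/
def IsQChannel {A B : Type*} [Fintype A] [Fintype B] [DecidableEq A]
    (T : Matrix A A ℂ → Matrix B B ℂ) : Prop :=
  IsLinearMap ℂ T ∧ (∀ X, (T X).trace = X.trace) ∧ (choi T).PosSemidef

/-- The max-relative entropy of entanglement of a quantum channel:
`E_max(T) = sup {E_max^{R:B}((id_R ⊗ T)(ρ)) : ρ a state on R ⊗ A, dim R arbitrary}`. -/
def EmaxChan {A B : Type*} [Fintype A] [Fintype B]
    (T : Matrix A A ℂ → Matrix B B ℂ) : EReal :=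
  ⨆ (dR : ℕ) (ρ : {ρ : Matrix (Fin dR × A) (Fin dR × A) ℂ // IsState ρ}),
    EmaxState (applyRight T (ρ : Matrix (Fin dR × A) (Fin dR × A) ℂ))

/-- Partial trace over the second tensor factor. -/
def ptraceSnd {B C : Type*} [Fintype C] (M : Matrix (B × C) (B × C) ℂ) : Matrix B B ℂ :=
  Matrix.of fun b b' => ∑ c : C, M (b, c) (b', c)

/-- Partial trace over the third tensor factor. -/
def ptraceThird {A B C : Type*} [Fintype C] (ρ : Matrix (A × B × C) (A × B × C) ℂ) :
    Matrix (A × B) (A × B) ℂ :=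
  Matrix.of fun x y => ∑ c : C, ρ (x.1, x.2, c) (y.1, y.2, c)

/-- Tensoring with the identity on a third factor: `M ⊗ I_C` on `A ⊗ B ⊗ C`. -/
def tensorId3 {A B C : Type*} [DecidableEq C] [Fintype C] (M : Matrix (A × B) (A × B) ℂ) :
    Matrix (A × B × C) (A × B × C) ℂ :=
  (M ⊗ₖ (1 : Matrix C C ℂ)).submatrix (Equiv.prodAssoc A B C).symm (Equiv.prodAssoc A B C).symm

end
noncomputable section

/-- The trace norm `‖M‖₁ = tr[(M†M)^{1/2}]`. -/
def traceNorm {n : Type*} [Fintype n] [DecidableEq n] (M : Matrix n n ℂ) : ℝ :=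
  (matRPow (Mᴴ * M) (1 / 2 : ℝ)).trace.re

/-- The weighted trace norm `‖X‖_{1,τ} = tr|τ^{1/2} X τ^{1/2}|`. -/
def wnorm1 {n : Type*} [Fintype n] [DecidableEq n] (τ X : Matrix n n ℂ) : ℝ :=
  traceNorm (matRPow τ (1 / 2 : ℝ) * X * matRPow τ (1 / 2 : ℝ))

/-- The spectral (operator) norm of a matrix, as the operator norm of the induced
linear map on Euclidean space. -/
def specNorm {n : Type*} [Fintype n] [DecidableEq n] (M : Matrix n n ℂ) : ℝ :=
  ‖LinearMap.toContinuousLinearMap (Matrix.toEuclideanLin M)‖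

/-- The `d × d` quantum Fourier transform, `(U)_{jk} = e^{2πi jk/d}/√d` for `j,k ∈ {1,…,d}`. -/
def fourierMat (d : ℕ) : Matrix (Fin d) (Fin d) ℂ :=
  Matrix.of fun j k =>
    Complex.exp (2 * (Real.pi : ℂ) * Complex.I * ((((j : ℕ) : ℂ) + 1) * (((k : ℕ) : ℂ) + 1))
        / (d : ℂ)) / ((Real.sqrt d : ℝ) : ℂ)

/-- `U_1 = 1` and `U_2` the quantum Fourier transform. -/
def flowerU (d : ℕ) : Fin 2 → Matrix (Fin d) (Fin d) ℂ :=
  fun l => if l = 0 then 1 else fourierMat d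

/-- The flower state `ρ^f = (1/2d) Σ_{i,k} Σ_{j,l} ⟨k|U_l† U_j|i⟩ |ii⟩⟨kk|_{AB} ⊗ |jj⟩⟨ll|_{A'B'}`,
written on the index `(A × A') × (B × B')` (input system times output system). -/
def flowerState (d : ℕ) :
    Matrix ((Fin d × Fin 2) × (Fin d × Fin 2)) ((Fin d × Fin 2) × (Fin d × Fin 2)) ℂ :=
  Matrix.of fun x y =>
    if x.2.1 = x.1.1 ∧ x.2.2 = x.1.2 ∧ y.2.1 = y.1.1 ∧ y.2.2 = y.1.2 then
      (1 / (2 * (d : ℂ))) * (((flowerU d y.1.2)ᴴ * flowerU d x.1.2) y.1.1 x.1.1)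
    else 0

/-- `p = 1/(√d + 1)`. -/
def pparam (d : ℕ) : ℝ := 1 / (Real.sqrt d + 1)

/-- `Y = (1/d) Σ_{i,j} u_{ij} |ii⟩⟨jj|` on `ℂ^d_A ⊗ ℂ^d_B`, `u` the QFT entries. -/
def Ymat (d : ℕ) : Matrix (Fin d × Fin d) (Fin d × Fin d) ℂ :=
  Matrix.of fun x y =>
    if x.1 = x.2 ∧ y.1 = y.2 then (1 / (d : ℂ)) * fourierMat d x.1 y.1 else 0

/-- The blocks of the separable comparison Choi matrix `C_S`, indexed by the `A'B'` qubit pair. -/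
def CSblock (d : ℕ) (i j : Fin 2 × Fin 2) : Matrix (Fin d × Fin d) (Fin d × Fin d) ℂ :=
  if i = j then
    if i = (0, 1) then ((2 * pparam d : ℝ) : ℂ) • matRPow (Ymat d * (Ymat d)ᴴ) (1 / 2 : ℝ)
    else if i = (1, 0) then ((2 * pparam d : ℝ) : ℂ) • matRPow ((Ymat d)ᴴ * Ymat d) (1 / 2 : ℝ)
    else (((1 - pparam d) / (d ^ 2 : ℝ) : ℝ) : ℂ) • (1 : Matrix (Fin d × Fin d) (Fin d × Fin d) ℂ)
  else 0

/-- The separable comparison Choi matrix `C_S` on `ℂ²_{A'} ⊗ ℂ²_{B'} ⊗ ℂ^d_A ⊗ ℂ^d_B`,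
written on the index `(A' × A) × (B' × B)` grouping the bipartition `(A'A) : (B'B)`. -/
def CSmat (d : ℕ) :
    Matrix ((Fin 2 × Fin d) × (Fin 2 × Fin d)) ((Fin 2 × Fin d) × (Fin 2 × Fin d)) ℂ :=
  Matrix.of fun x y =>
    (1 / (2 * (1 + pparam d) : ℝ) : ℂ) *
      CSblock d (x.1.1, x.2.1) (y.1.1, y.2.1) (x.1.2, x.2.2) (y.1.2, y.2.2)

/-- The blocks of the matrix `M` (the partially transposed state), indexed by the `A'B'`
qubit pair. -/
def Mblock (d : ℕ) (i j : Fin 2 × Fin 2) : Matrix (Fin d × Fin d) (Fin d × Fin d) ℂ :=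
  if i = j then
    if i = (0, 1) then ((pparam d : ℝ) : ℂ) • matRPow (Ymat d * (Ymat d)ᴴ) (1 / 2 : ℝ)
    else if i = (1, 0) then ((pparam d : ℝ) : ℂ) • matRPow ((Ymat d)ᴴ * Ymat d) (1 / 2 : ℝ)
    else (((1 - pparam d) / (d ^ 2 : ℝ) : ℝ) : ℂ) • (1 : Matrix (Fin d × Fin d) (Fin d × Fin d) ℂ)
  else if i = (0, 1) ∧ j = (1, 0) then ((pparam d : ℝ) : ℂ) • Ymat d
  else if i = (1, 0) ∧ j = (0, 1) then ((pparam d : ℝ) : ℂ) • (Ymat d)ᴴ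
  else 0

/-- The matrix `M` on `ℂ²_{A'} ⊗ ℂ²_{B'} ⊗ ℂ^d_A ⊗ ℂ^d_B`, written on the index
`(A' × A) × (B' × B)`. -/
def Mmat (d : ℕ) :
    Matrix ((Fin 2 × Fin d) × (Fin 2 × Fin d)) ((Fin 2 × Fin d) × (Fin 2 × Fin d)) ℂ :=
  Matrix.of fun x y =>
    (1 / 2 : ℂ) * Mblock d (x.1.1, x.2.1) (y.1.1, y.2.1) (x.1.2, x.2.2) (y.1.2, y.2.2)

end



section AuxSep

open Matrix
open scoped ComplexOrder Kronecker

variable {n m : Type*} [Fintype n] [Fintype m]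

lemma aux_psd_csmul {M : Matrix n n ℂ} (hM : M.PosSemidef) {r : ℝ} (hr : 0 ≤ r) :
    (((r : ℂ)) • M).PosSemidef := by
  refine ⟨?_, fun x => ?_⟩
  · have h := hM.1
    simp only [Matrix.IsHermitian, conjTranspose_smul, h.eq, RCLike.star_def,
      Complex.conj_ofReal]
  · exact (hM.smul (a := (r : ℂ)) (by exact_mod_cast hr)).2 x

lemma aux_psd_rsmul {M : Matrix n n ℂ} (hM : M.PosSemidef) {r : ℝ} (hr : 0 ≤ r) :
    ((r • M : Matrix n n ℂ)).PosSemidef := by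
  have h : (r • M : Matrix n n ℂ) = ((r : ℂ)) • M := by
    ext x y
    simp [Complex.real_smul]
  rw [h]; exact aux_psd_csmul hM hr

lemma aux_kron_conjT {p q : Type*} (A : Matrix p p ℂ) (B : Matrix q q ℂ) :
    (A ⊗ₖ B)ᴴ = Aᴴ ⊗ₖ Bᴴ := by
  ext x y
  simp [conjTranspose_apply, Matrix.kroneckerMap_apply, star_mul']

lemma aux_psd_kron [DecidableEq n] [DecidableEq m] {A : Matrix n n ℂ} {B : Matrix m m ℂ}
    (hA : A.PosSemidef) (hB : B.PosSemidef) : (A ⊗ₖ B).PosSemidef := by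
  exact hA.kronecker hB

lemma aux_psd_sum {ι : Type*} (s : Finset ι) (f : ι → Matrix n n ℂ)
    (h : ∀ i ∈ s, (f i).PosSemidef) : (∑ i ∈ s, f i).PosSemidef := by
  classical
  induction s using Finset.induction_on with
  | empty => simpa using Matrix.PosSemidef.zero
  | @insert a s hni ih =>
      rw [Finset.sum_insert hni]
      exact (h _ (Finset.mem_insert_self _ _)).add
        (ih fun i hi => h i (Finset.mem_insert_of_mem hi))

lemma aux_sep_psd {A B : Type*} [Fintype A] [Fintype B]
    {σ : Matrix (A × B) (A × B) ℂ} (h : IsSepState σ) : σ.PosSemidef := by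
  classical
  obtain ⟨k, p, t1, t2, hp, -, h1, h2, rfl⟩ := h
  exact aux_psd_sum _ _ fun i _ =>
    aux_psd_csmul (aux_psd_kron (h1 i).1 (h2 i).1) (hp i)

lemma aux_sep_of_fintype {A B : Type*} [Fintype A] [Fintype B] {ι : Type*} [Fintype ι]
    (p : ι → ℝ) (t1 : ι → Matrix A A ℂ) (t2 : ι → Matrix B B ℂ)
    (hp : ∀ i, 0 ≤ p i) (hs : ∑ i, p i = 1) (h1 : ∀ i, IsState (t1 i))
    (h2 : ∀ i, IsState (t2 i)) :
    IsSepState (∑ i, ((p i : ℂ)) • (t1 i ⊗ₖ t2 i)) := by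
  obtain ⟨e⟩ : Nonempty (Fin (Fintype.card ι) ≃ ι) := ⟨(Fintype.equivFin ι).symm⟩
  refine ⟨Fintype.card ι, p ∘ e, t1 ∘ e, t2 ∘ e, fun i => hp _, ?_, fun i => h1 _,
    fun i => h2 _, ?_⟩
  · rw [← hs]; exact Fintype.sum_equiv e _ _ fun i => rfl
  · exact (Fintype.sum_equiv e _ _ fun i => rfl).symm

lemma aux_sep_combo {A B : Type*} [Fintype A] [Fintype B] {ι : Type*} [Fintype ι]
    (p : ι → ℝ) (σs : ι → Matrix (A × B) (A × B) ℂ)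
    (hp : ∀ i, 0 ≤ p i) (hs : ∑ i, p i = 1) (hsep : ∀ i, IsSepState (σs i)) :
    IsSepState (∑ i, ((p i : ℂ)) • σs i) := by
  classical
  choose k q t1 t2 hq hqs h1 h2 hdec using hsep
  have key : (∑ i, ((p i : ℂ)) • σs i)
      = ∑ x : Σ i : ι, Fin (k i),
          (((p x.1 * q x.1 x.2 : ℝ) : ℂ)) • (t1 x.1 x.2 ⊗ₖ t2 x.1 x.2) := by
    rw [← Finset.univ_sigma_univ, Finset.sum_sigma]
    refine Finset.sum_congr rfl fun i _ => ?_
    rw [hdec i, Finset.smul_sum]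
    refine Finset.sum_congr rfl fun j _ => ?_
    rw [smul_smul, ← Complex.ofReal_mul]
  rw [key]
  exact aux_sep_of_fintype _ _ _ (fun x => mul_nonneg (hp _) (hq _ _))
    (by rw [← Finset.univ_sigma_univ, Finset.sum_sigma]
        simp_rw [← Finset.mul_sum, hqs, mul_one]; exact hs)
    (fun x => h1 x.1 x.2) (fun x => h2 x.1 x.2)

lemma aux_sep_reorg {A B C : Type*} [Fintype A] [Fintype B] [Fintype C]
    {σ' : Matrix (A × B) (A × B) ℂ} (hσ' : IsSepState σ') {ω : Matrix C C ℂ}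
    (hω : IsState ω) :
    IsSepState ((σ' ⊗ₖ ω).submatrix (fun x : A × B × C => ((x.1, x.2.1), x.2.2))
      (fun x : A × B × C => ((x.1, x.2.1), x.2.2))) := by
  classical
  obtain ⟨k, q, t1, t2, hq, hqs, h1, h2, rfl⟩ := hσ'
  have key : (((∑ j, ((q j : ℂ)) • (t1 j ⊗ₖ t2 j)) ⊗ₖ ω).submatrix
        (fun x : A × B × C => ((x.1, x.2.1), x.2.2))
        (fun x : A × B × C => ((x.1, x.2.1), x.2.2)))
      = ∑ j, ((q j : ℂ)) • (t1 j ⊗ₖ (t2 j ⊗ₖ ω)) := by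
    ext x y
    simp only [Matrix.submatrix_apply, Matrix.kroneckerMap_apply, Matrix.sum_apply,
      Matrix.smul_apply, smul_eq_mul, Finset.sum_mul]
    exact Finset.sum_congr rfl fun j _ => by ring
  rw [key]
  exact aux_sep_of_fintype q t1 (fun j => t2 j ⊗ₖ ω) hq hqs h1
    (fun j => ⟨aux_psd_kron (h2 j).1 hω.1, by
      rw [Matrix.trace_kronecker, (h2 j).2, hω.2, one_mul]⟩)

end AuxSep

set_option maxHeartbeats 1000000 in
/-- **Separable inputs do not increase the channel max-relative entropy of entanglement**:
if `σ_{AA'B}` is separable w.r.t `AA' : B`, then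
`E_max^{A:B'B}((id_A ⊗ T ⊗ id_B)(σ_{AA'B})) ≤ E_max(T)`. -/
theorem separable_input_emax
    {dA' dB' : ℕ} (T : Matrix (Fin dA') (Fin dA') ℂ → Matrix (Fin dB') (Fin dB') ℂ)
    (hT : IsQChannel T) (dA dB : ℕ)
    (σ : Matrix (Fin dA × Fin dA' × Fin dB) (Fin dA × Fin dA' × Fin dB) ℂ)
    (hσ : IsState σ) (hsep : IsSepState (assocL σ)) :
    EmaxState (applyMiddle T σ) ≤ EmaxChan T := by
  classical
  obtain ⟨hTlin, hTtr, hTpsd⟩ := hT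
  obtain ⟨k, p, τ, ω, hp, hps, hτ, hω, hdec⟩ := hsep
  have hk : 0 < k := by
    rcases Nat.eq_zero_or_pos k with h | h
    · subst h; simp at hps
    · exact h
  have hne : (Finset.univ : Finset (Fin k)).Nonempty := ⟨⟨0, hk⟩, Finset.mem_univ _⟩
  have hσe : ∀ a b c a' b' c', σ (a, b, c) (a', b', c')
      = ∑ i, (p i : ℂ) * (τ i (a, b) (a', b') * ω i c c') := by
    intro a b c a' b' c'
    have h := congrFun (congrFun hdec ((a, b), c)) ((a', b'), c')
    simpa [assocL, Matrix.submatrix_apply, Equiv.prodAssoc, Matrix.sum_apply,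
      Matrix.kroneckerMap_apply, Matrix.smul_apply, smul_eq_mul] using h
  set ρ := applyMiddle T σ with hρdef
  set Mi : Fin k → Matrix (Fin dA × Fin dB') (Fin dA × Fin dB') ℂ :=
    fun i => applyRight T (τ i) with hMidef
  have hρe : ∀ x y : Fin dA × Fin dB' × Fin dB,
      ρ x y = ∑ i, (p i : ℂ) * (Mi i (x.1, x.2.1) (y.1, y.2.1) * ω i x.2.2 y.2.2) := by
    intro x y
    have hin : (Matrix.of fun a a' => σ (x.1, a, x.2.2) (y.1, a', y.2.2))
        = ∑ i, ((p i : ℂ) * ω i x.2.2 y.2.2) •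
            (Matrix.of fun a a' => τ i (x.1, a) (y.1, a')) := by
      ext a a'
      simp only [Matrix.of_apply, Matrix.sum_apply, Matrix.smul_apply, smul_eq_mul]
      rw [hσe]
      exact Finset.sum_congr rfl fun i _ => by ring
    have hL : ∀ X, T X = (IsLinearMap.mk' T hTlin) X := fun X => rfl
    show T (Matrix.of fun a a' => σ (x.1, a, x.2.2) (y.1, a', y.2.2)) x.2.1 y.2.1 = _
    rw [hin, hL, map_sum]
    simp only [LinearMap.map_smul, IsLinearMap.mk'_apply, Matrix.sum_apply,
      Matrix.smul_apply, smul_eq_mul]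
    refine Finset.sum_congr rfl fun i _ => ?_
    rw [show (Mi i (x.1, x.2.1) (y.1, y.2.1) : ℂ)
      = T (Matrix.of fun a a' => τ i (x.1, a) (y.1, a')) x.2.1 y.2.1 from rfl]
    ring
  refine le_of_forall_gt_imp_ge_of_dense fun y hy => ?_
  have step : ∀ i : Fin k, ∃ (S : Matrix (Fin dA × Fin dB') (Fin dA × Fin dB') ℂ)
      (c : ℝ), IsSepState S ∧ 0 < c ∧ ((c : ℝ) • S - Mi i).PosSemidef ∧
        ((Real.logb 2 c : ℝ) : EReal) < y := by
    intro i
    have h1 : EmaxState (Mi i) < y := by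
      refine lt_of_le_of_lt ?_ hy
      unfold EmaxChan
      exact le_iSup_of_le dA (le_iSup_of_le ⟨τ i, hτ i⟩ le_rfl)
    unfold EmaxState at h1
    obtain ⟨⟨S, hS⟩, hSlt⟩ := iInf_lt_iff.mp h1
    unfold Dmax at hSlt
    obtain ⟨⟨c, hc⟩, hclt⟩ := iInf_lt_iff.mp hSlt
    exact ⟨S, c, hS, hc.1, hc.2, hclt⟩
  choose S c hSsep hcpos hcpsd hclt using step
  have : Nonempty (Fin k) := ⟨⟨0, hk⟩⟩
  obtain ⟨i0, hi0⟩ := Finite.exists_max c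
  set cmax : ℝ := c i0 with hcmax
  have hcmaxpos : 0 < cmax := hcpos i0
  have hcle : ∀ i, c i ≤ cmax := hi0
  set e : Fin dA × Fin dB' × Fin dB → (Fin dA × Fin dB') × Fin dB :=
    fun x => ((x.1, x.2.1), x.2.2) with he
  set σstar := ∑ i, (p i : ℂ) • ((S i ⊗ₖ ω i).submatrix e e) with hσstar
  have hsepstar : IsSepState σstar :=
    aux_sep_combo p _ hp hps fun i => aux_sep_reorg (hSsep i) (hω i)
  have key : (cmax : ℝ) • σstar - ρ
      = ∑ i, (p i : ℂ) • ((((cmax : ℝ) • S i - Mi i) ⊗ₖ ω i).submatrix e e) := by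
    ext x y
    simp only [Matrix.sub_apply, Matrix.smul_apply, Matrix.sum_apply,
      Matrix.submatrix_apply, Matrix.kroneckerMap_apply, smul_eq_mul,
      Complex.real_smul, hρe x y, hσstar, he]
    rw [Finset.mul_sum, ← Finset.sum_sub_distrib]
    exact Finset.sum_congr rfl fun i _ => by ring
  have hpsd : ((cmax : ℝ) • σstar - ρ).PosSemidef := by
    rw [key]
    refine aux_psd_sum _ _ fun i _ => aux_psd_csmul ?_ (hp i)
    refine Matrix.PosSemidef.submatrix ?_ e
    refine aux_psd_kron ?_ (hω i).1
    have hsplit : (cmax : ℝ) • S i - Mi i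
        = ((c i : ℝ) • S i - Mi i) + (cmax - c i) • S i := by
      rw [sub_smul]; abel
    rw [hsplit]
    exact (hcpsd i).add (aux_psd_rsmul (aux_sep_psd (hSsep i)) (sub_nonneg.mpr (hcle i)))
  have h1 : EmaxState ρ ≤ Dmax ρ σstar := by
    have hh := iInf_le (ι := {σ0 : Matrix (Fin dA × Fin dB' × Fin dB) (Fin dA × Fin dB' × Fin dB) ℂ // IsSepState σ0})
      (f := fun σ0 => Dmax ρ (σ0 : Matrix (Fin dA × Fin dB' × Fin dB) (Fin dA × Fin dB' × Fin dB) ℂ))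
      ⟨σstar, hsepstar⟩
    exact hh
  have h2 : Dmax ρ σstar ≤ ((Real.logb 2 cmax : ℝ) : EReal) := by
    have hh := iInf_le (ι := {c0 : ℝ // 0 < c0 ∧ (c0 • σstar - ρ).PosSemidef})
      (f := fun c0 => ((Real.logb 2 (c0 : ℝ) : ℝ) : EReal)) ⟨cmax, hcmaxpos, hpsd⟩
    exact hh
  exact h1.trans (h2.trans (hclt i0).le)
end

section
/- Convex-decomposition bound for the max-relative entropy of entanglement: Let k ∈ ℕ, let ρ^1_{AB}, …, ρ^k_{AB} be density matrices on ℂ^{d_A} ⊗ ℂ^{d_B}, let p_1, …, p_k ∈ [0,1] with Σ_i p_i = 1, and set ρ_{AB} = Σ_i p_i ρ^i_{AB}. Then Σ_{i=1}^k p_i · E_max^{A:B}(ρ^i_{AB}) ≤ E_max^{A:B}(ρ_{AB}) + Σ_{i=1}^k p_i · D_max(ρ^i_{AB}‖ρ_{AB}). -/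
open Matrix
open scoped Kronecker ComplexOrder
attribute [local instance] Classical.propDecidable

section EmaxAuxiliary

open scoped ComplexOrder

variable {n : Type*} [Fintype n]

private lemma psd_trace_nonneg' {A : Matrix n n ℂ} (hA : A.PosSemidef) : (0:ℂ) ≤ A.trace := by
  refine Finset.sum_nonneg fun i _ => ?_
  have := hA.diag_nonneg (i := i)
  simpa [dotProduct, Matrix.mulVec, Pi.single_apply, Finset.sum_ite_eq,
    Matrix.diag] using this

private lemma psd_smul' {A : Matrix n n ℂ} (hA : A.PosSemidef) {r : ℝ} (hr : 0 ≤ r) :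
    (r • A).PosSemidef := by
  have h : (r:ℝ) • A = ((r:ℂ)) • A := by
    ext i j; simp [Matrix.smul_apply, Complex.real_smul]
  rw [h]
  rw [posSemidef_iff_dotProduct_mulVec]
  constructor
  · have h1 := hA.1
    unfold Matrix.IsHermitian at h1 ⊢
    rw [conjTranspose_smul, h1]
    congr 1
    simp [Complex.star_def, Complex.conj_ofReal]
  · intro x
    rw [smul_mulVec, dotProduct_smul, smul_eq_mul]
    exact mul_nonneg (by exact_mod_cast hr) (hA.dotProduct_mulVec_nonneg x)

private lemma dmax_nonneg' {ρ σ : Matrix n n ℂ} (hρ : ρ.trace = 1) (hσ : σ.trace = 1) :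
    (0:EReal) ≤ Dmax ρ σ := by
  refine le_iInf fun c => ?_
  obtain ⟨c, hc, hpsd⟩ := c
  have htr := psd_trace_nonneg' hpsd
  rw [trace_sub, trace_smul, hρ, hσ] at htr
  have : (1:ℝ) ≤ c := by
    have h2 : (0:ℝ) ≤ ((c:ℝ) • (1:ℂ) - 1).re := by
      exact_mod_cast (Complex.le_def.mp htr).1
    simpa using h2
  exact_mod_cast Real.logb_nonneg one_lt_two this

private lemma dmax_triangle' {ρ τ σ : Matrix n n ℂ}
    (hB : (0:EReal) ≤ Dmax ρ τ) (hC : (0:EReal) ≤ Dmax τ σ) :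
    Dmax ρ σ ≤ Dmax ρ τ + Dmax τ σ := by
  by_cases hBt : Dmax ρ τ = ⊤
  · rw [hBt, EReal.top_add_of_ne_bot (by intro h; rw [h] at hC; exact absurd hC (by simp))]
    exact le_top
  by_cases hCt : Dmax τ σ = ⊤
  · rw [hCt, EReal.add_top_of_ne_bot (by intro h; rw [h] at hB; exact absurd hB (by simp))]
    exact le_top
  have hBb : Dmax ρ τ ≠ ⊥ := fun h => by rw [h] at hB; exact absurd hB (by simp)
  have hCb : Dmax τ σ ≠ ⊥ := fun h => by rw [h] at hC; exact absurd hC (by simp)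
  set b := (Dmax ρ τ).toReal with hbdef
  set c := (Dmax τ σ).toReal with hcdef
  have hBr : Dmax ρ τ = (b : EReal) := (EReal.coe_toReal hBt hBb).symm
  have hCr : Dmax τ σ = (c : EReal) := (EReal.coe_toReal hCt hCb).symm
  by_contra hcon
  push_neg at hcon
  rw [hBr, hCr, ← EReal.coe_add] at hcon
  obtain ⟨m, hm1, hm2⟩ := EReal.exists_between_coe_real hcon
  have hbc : b + c < m := by exact_mod_cast hm1
  set ε := (m - (b + c)) / 2 with hεdef
  have hε : 0 < ε := by simp [hεdef]; linarith
  have hB' : Dmax ρ τ < ((b + ε : ℝ) : EReal) := by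
    rw [hBr]; exact_mod_cast (by linarith : b < b + ε)
  have hC' : Dmax τ σ < ((c + ε : ℝ) : EReal) := by
    rw [hCr]; exact_mod_cast (by linarith : c < c + ε)
  obtain ⟨⟨c₁, hc₁, h₁⟩, hlt₁⟩ := iInf_lt_iff.mp hB'
  obtain ⟨⟨c₂, hc₂, h₂⟩, hlt₂⟩ := iInf_lt_iff.mp hC'
  have key : ((c₁ * c₂ : ℝ) • σ - ρ).PosSemidef := by
    have heq : (c₁ * c₂ : ℝ) • σ - ρ = c₁ • ((c₂ : ℝ) • σ - τ) + ((c₁ : ℝ) • τ - ρ) := by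
      rw [smul_sub, smul_smul]; abel
    rw [heq]
    exact (psd_smul' h₂ hc₁.le).add h₁
  have hle : Dmax ρ σ ≤ ((Real.logb 2 (c₁ * c₂) : ℝ) : EReal) :=
    iInf_le (fun c : {c : ℝ // 0 < c ∧ ((c : ℝ) • σ - ρ).PosSemidef} =>
      ((Real.logb 2 (c : ℝ) : ℝ) : EReal)) ⟨c₁ * c₂, mul_pos hc₁ hc₂, key⟩
  have hl1 : Real.logb 2 c₁ < b + ε := by exact_mod_cast hlt₁
  have hl2 : Real.logb 2 c₂ < c + ε := by exact_mod_cast hlt₂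
  have hm : Real.logb 2 (c₁ * c₂) < m := by
    rw [Real.logb_mul hc₁.ne' hc₂.ne']
    have : b + ε + (c + ε) = m := by rw [hεdef]; ring
    linarith
  exact absurd (hle.trans_lt (by exact_mod_cast hm)) (not_lt.mpr hm2.le)

private lemma sep_trace_one' {A B : Type*} [Fintype A] [Fintype B]
    {σ : Matrix (A × B) (A × B) ℂ} (h : IsSepState σ) : σ.trace = 1 := by
  obtain ⟨k, p, τ₁, τ₂, hp0, hp1, ht1, ht2, rfl⟩ := h
  rw [trace_sum]
  simp only [trace_smul, trace_kronecker, (ht1 _).2, (ht2 _).2, mul_one, smul_eq_mul]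
  exact_mod_cast congrArg (fun x : ℝ => (x : ℂ)) hp1

private lemma emax_nonneg' {A B : Type*} [Fintype A] [Fintype B]
    {ρ : Matrix (A × B) (A × B) ℂ} (h : ρ.trace = 1) : (0:EReal) ≤ EmaxState ρ :=
  le_iInf fun σ => dmax_nonneg' h (sep_trace_one' σ.2)

private lemma emax_le_aux' {A B : Type*} [Fintype A] [Fintype B]
    {ρ' ρ : Matrix (A × B) (A × B) ℂ} (h1 : ρ'.trace = 1) (h2 : ρ.trace = 1) :
    EmaxState ρ' ≤ EmaxState ρ + Dmax ρ' ρ := by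
  have hD : (0:EReal) ≤ Dmax ρ' ρ := dmax_nonneg' h1 h2
  have hE : (0:EReal) ≤ EmaxState ρ := emax_nonneg' h2
  have hEb : EmaxState ρ ≠ ⊥ := fun h => by rw [h] at hE; exact absurd hE (by simp)
  have hDb : Dmax ρ' ρ ≠ ⊥ := fun h => by rw [h] at hD; exact absurd hD (by simp)
  by_cases hDt : Dmax ρ' ρ = ⊤
  · rw [hDt, EReal.add_top_of_ne_bot hEb]; exact le_top
  by_cases hEt : EmaxState ρ = ⊤
  · rw [hEt, EReal.top_add_of_ne_bot hDb]; exact le_top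
  set d := (Dmax ρ' ρ).toReal with hddef
  set e := (EmaxState ρ).toReal with hedef
  have hDr : Dmax ρ' ρ = (d : EReal) := (EReal.coe_toReal hDt hDb).symm
  have hEr : EmaxState ρ = (e : EReal) := (EReal.coe_toReal hEt hEb).symm
  have key : ∀ σ : {σ : Matrix (A × B) (A × B) ℂ // IsSepState σ},
      EmaxState ρ' ≤ Dmax ρ' ρ + Dmax ρ (σ : Matrix (A × B) (A × B) ℂ) := fun σ =>
    (iInf_le (fun σ : {σ : Matrix (A × B) (A × B) ℂ // IsSepState σ} =>
        Dmax ρ' (σ : Matrix (A × B) (A × B) ℂ)) σ).trans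
      (dmax_triangle' hD (dmax_nonneg' h2 (sep_trace_one' σ.2)))
  by_contra hcon
  push_neg at hcon
  rw [hEr, hDr, ← EReal.coe_add] at hcon
  obtain ⟨m, hm1, hm2⟩ := EReal.exists_between_coe_real hcon
  have hed : e + d < m := by exact_mod_cast hm1
  have hlt : EmaxState ρ < ((m - d : ℝ) : EReal) := by
    rw [hEr]; exact_mod_cast (by linarith : e < m - d)
  obtain ⟨σ, hσ⟩ := iInf_lt_iff.mp hlt
  have hfin : Dmax ρ' ρ + Dmax ρ (σ : Matrix (A × B) (A × B) ℂ) < (m : EReal) := by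
    rw [hDr]
    calc (d : EReal) + Dmax ρ (σ : Matrix (A × B) (A × B) ℂ)
        < (d : EReal) + ((m - d : ℝ) : EReal) := EReal.add_lt_add_left_coe hσ d
      _ = (m : EReal) := by rw [← EReal.coe_add]; norm_num
  exact absurd ((key σ).trans_lt hfin) (not_lt.mpr hm2.le)

private lemma ecoe_sum' {ι : Type*} (s : Finset ι) (f : ι → ℝ) :
    ((∑ i ∈ s, f i : ℝ) : EReal) = ∑ i ∈ s, ((f i : ℝ) : EReal) := by
  induction s using Finset.cons_induction with
  | empty => simp
  | cons a s ha ih => rw [Finset.sum_cons, Finset.sum_cons, EReal.coe_add, ih]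

end EmaxAuxiliary

/-- **Convex-decomposition bound** for the max-relative entropy of entanglement:
`Σ p_i E_max(ρ^i) ≤ E_max(Σ p_i ρ^i) + Σ p_i D_max(ρ^i ‖ Σ p_j ρ^j)`. -/
theorem emax_convex_decomposition
    {dA dB : ℕ} (k : ℕ)
    (ρi : Fin k → Matrix (Fin dA × Fin dB) (Fin dA × Fin dB) ℂ)
    (hρi : ∀ i, IsState (ρi i))
    (p : Fin k → ℝ) (hp0 : ∀ i, 0 ≤ p i) (hp1 : ∀ i, p i ≤ 1) (hsum : ∑ i, p i = 1) :
    ∑ i, ((p i : ℝ) : EReal) * EmaxState (ρi i) ≤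
      EmaxState (∑ i, ((p i : ℝ) : ℂ) • ρi i) +
        ∑ i, ((p i : ℝ) : EReal) * Dmax (ρi i) (∑ j, ((p j : ℝ) : ℂ) • ρi j) := by
  set ρ := ∑ i, ((p i : ℝ) : ℂ) • ρi i with hρdef
  have hρtr : ρ.trace = 1 := by
    rw [hρdef, trace_sum]
    simp only [trace_smul, (hρi _).2, smul_eq_mul, mul_one]
    exact_mod_cast congrArg (fun x : ℝ => (x : ℂ)) hsum
  have hE : (0:EReal) ≤ EmaxState ρ := emax_nonneg' hρtr
  have hEb : EmaxState ρ ≠ ⊥ := fun h => by rw [h] at hE; exact absurd hE (by simp)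
  have hDnn : ∀ i, (0:EReal) ≤ Dmax (ρi i) ρ := fun i => dmax_nonneg' (hρi i).2 hρtr
  have hEi : ∀ i, EmaxState (ρi i) ≤ EmaxState ρ + Dmax (ρi i) ρ := fun i =>
    emax_le_aux' (hρi i).2 hρtr
  calc ∑ i, ((p i : ℝ) : EReal) * EmaxState (ρi i)
      ≤ ∑ i, (((p i : ℝ) : EReal) * EmaxState ρ + ((p i : ℝ) : EReal) * Dmax (ρi i) ρ) := by
        refine Finset.sum_le_sum fun i _ => ?_
        rw [← EReal.left_distrib_of_nonneg hE (hDnn i)]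
        exact mul_le_mul_of_nonneg_left (hEi i) (by exact_mod_cast hp0 i)
    _ = ∑ i, ((p i : ℝ) : EReal) * EmaxState ρ
          + ∑ i, ((p i : ℝ) : EReal) * Dmax (ρi i) ρ := Finset.sum_add_distrib
    _ ≤ EmaxState ρ + ∑ i, ((p i : ℝ) : EReal) * Dmax (ρi i) ρ := by
        refine add_le_add ?_ le_rfl
        by_cases hEt : EmaxState ρ = ⊤
        · rw [hEt]; exact le_top
        · have hEr : EmaxState ρ = (((EmaxState ρ).toReal : ℝ) : EReal) :=
            (EReal.coe_toReal hEt hEb).symm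
          rw [hEr]
          have : ∑ i, ((p i : ℝ) : EReal) * (((EmaxState ρ).toReal : ℝ) : EReal)
              = ((∑ i, p i * (EmaxState ρ).toReal : ℝ) : EReal) := by
            rw [ecoe_sum']
            exact Finset.sum_congr rfl fun i _ => (EReal.coe_mul _ _).symm
          rw [this]
          apply le_of_eq
          congr 1
          rw [← Finset.sum_mul, hsum, one_mul]
end

section
/- Non-lockability of the max-relative entropy of entanglement: For any tripartite density matrix ρ_{ABB'} on ℂ^{d_A} ⊗ ℂ^{d_B} ⊗ ℂ^{d_{B'}}, one has E_max^{A:BB'}(ρ_{ABB'}) − E_max^{A:B}(ρ_{AB}) ≤ 2·log₂(d_{B'}), where ρ_{AB} = tr_{B'}(ρ_{ABB'}) is the partial trace over the B' system, E_max^{A:BB'} is taken w.r.t. the bipartition A : BB', and E_max^{A:B} w.r.t. A : B. -/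
open Matrix
open scoped Kronecker ComplexOrder
attribute [local instance] Classical.propDecidable

noncomputable section AuxNonLock
set_option linter.unusedSectionVars false

variable {A B C : Type*} [Fintype A] [Fintype B] [Fintype C] [DecidableEq C]

lemma tensorId3_apply' (M : Matrix (A × B) (A × B) ℂ) (x y : A × B × C) :
    tensorId3 M x y = M (x.1, x.2.1) (y.1, y.2.1) * (if x.2.2 = y.2.2 then 1 else 0) := by
  simp [tensorId3, Matrix.submatrix_apply, Equiv.prodAssoc, Matrix.one_apply]

lemma tensorId3_sub' (M N : Matrix (A × B) (A × B) ℂ) :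
    tensorId3 (C := C) (M - N) = tensorId3 M - tensorId3 N := by
  ext x y
  simp only [tensorId3_apply', Matrix.sub_apply, sub_mul]

lemma tensorId3_smul' (r : ℝ) (M : Matrix (A × B) (A × B) ℂ) :
    tensorId3 (C := C) (r • M) = r • tensorId3 M := by
  ext x y
  simp only [tensorId3_apply', Matrix.smul_apply, smul_mul_assoc]

lemma psd_smul'_s12 {n : Type*} [Fintype n] {M : Matrix n n ℂ} (hM : M.PosSemidef)
    {r : ℝ} (hr : 0 ≤ r) : ((r : ℝ) • M).PosSemidef := by
  refine Matrix.posSemidef_iff_dotProduct_mulVec.mpr ⟨?_, fun x => ?_⟩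
  · rw [Matrix.IsHermitian, Matrix.conjTranspose_smul, star_trivial, hM.1]
  · rw [Matrix.smul_mulVec, dotProduct_smul, Complex.real_smul]
    exact mul_nonneg (by exact_mod_cast hr) ((Matrix.posSemidef_iff_dotProduct_mulVec.mp hM).2 x)

open scoped MatrixOrder in
lemma posSemidef_iff_eq_transpose_mul_self' {n : Type*} [Fintype n] {M : Matrix n n ℂ} :
    M.PosSemidef ↔ ∃ B : Matrix n n ℂ, M = Bᴴ * B := by
  constructor
  · intro h
    exact CStarAlgebra.nonneg_iff_eq_star_mul_self.mp h.nonneg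
  · rintro ⟨B, rfl⟩
    exact Matrix.posSemidef_conjTranspose_mul_self B

lemma psd_kron' {M : Matrix A A ℂ} {N : Matrix B B ℂ}
    (hM : M.PosSemidef) (hN : N.PosSemidef) : (M ⊗ₖ N).PosSemidef := by
  obtain ⟨P, rfl⟩ := posSemidef_iff_eq_transpose_mul_self'.mp hM
  obtain ⟨Q, rfl⟩ := posSemidef_iff_eq_transpose_mul_self'.mp hN
  rw [Matrix.mul_kronecker_mul]
  have : Pᴴ ⊗ₖ Qᴴ = (P ⊗ₖ Q)ᴴ := by
    ext ⟨i,j⟩ ⟨k,l⟩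
    simp [Matrix.conjTranspose_apply, Matrix.kroneckerMap_apply]
  rw [this]
  exact Matrix.posSemidef_conjTranspose_mul_self _

lemma tensorId3_psd' {M : Matrix (A × B) (A × B) ℂ} (hM : M.PosSemidef) :
    (tensorId3 (C := C) M).PosSemidef :=
  (psd_kron' hM (Matrix.PosDef.one.posSemidef)).submatrix _

lemma my_sum_mulVec {ι n : Type*} [Fintype n] (s : Finset ι) (M : ι → Matrix n n ℂ) (x : n → ℂ) :
    (∑ i ∈ s, M i) *ᵥ x = ∑ i ∈ s, (M i *ᵥ x) := by
  ext j
  simp only [Matrix.mulVec, dotProduct, Matrix.sum_apply, Finset.sum_apply, Finset.sum_mul]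
  exact Finset.sum_comm

lemma my_dot_sum {ι n : Type*} [Fintype n] (s : Finset ι) (v : n → ℂ) (w : ι → n → ℂ) :
    dotProduct v (∑ i ∈ s, w i) = ∑ i ∈ s, dotProduct v (w i) := by
  simp only [dotProduct, Finset.sum_apply, Finset.mul_sum]
  exact Finset.sum_comm

lemma my_mulVec_sum {ι n m : Type*} [Fintype n] [Fintype m] (s : Finset ι)
    (M : Matrix m n ℂ) (u : ι → n → ℂ) :
    M *ᵥ (∑ i ∈ s, u i) = ∑ i ∈ s, M *ᵥ u i := by
  ext j
  simp only [Matrix.mulVec, dotProduct, Finset.sum_apply, Finset.mul_sum]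
  exact Finset.sum_comm

/-- selection matrices -/
def selE (c e : C) : Matrix (A × B × C) (A × B × C) ℂ :=
  Matrix.of fun p q => if p = (q.1, q.2.1, e) ∧ q.2.2 = c then 1 else 0

lemma sel_identity (ρ : Matrix (A × B × C) (A × B × C) ℂ) :
    tensorId3 (ptraceThird ρ) = ∑ c : C, ∑ e : C, (selE c e)ᴴ * ρ * (selE c e) := by
  ext p q
  simp only [Matrix.sum_apply, Matrix.mul_apply, Matrix.conjTranspose_apply, selE,
    Matrix.of_apply, Fintype.sum_prod_type, apply_ite (star (R := ℂ)), star_one, star_zero,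
    ite_mul, one_mul, zero_mul, mul_ite, mul_one, mul_zero, Prod.mk.injEq]
  simp only [ite_and, Finset.sum_ite_eq, Finset.sum_ite_eq', Finset.mem_univ, if_true]
  rw [tensorId3_apply']
  by_cases h : p.2.2 = q.2.2
  · simp [ptraceThird, h, Finset.sum_ite_eq]
  · simp [ptraceThird, h, Finset.sum_ite_eq]

lemma selE_diag_sum : (∑ c : C, selE (A := A) (B := B) c c) = 1 := by
  ext p q
  simp only [Matrix.sum_apply, selE, Matrix.of_apply, Matrix.one_apply]
  by_cases h : p = q
  · subst h
    simp [Prod.ext_iff]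
  · rw [if_neg h]
    refine Finset.sum_eq_zero fun c _ => ?_
    rw [if_neg]
    rintro ⟨h1, h2⟩
    exact h (by subst h2; rw [h1])

lemma star_dot_self {n : Type*} [Fintype n] (w : n → ℂ) :
    dotProduct (star w) w = ((∑ i, Complex.normSq (w i) : ℝ) : ℂ) := by
  simp [dotProduct, ← Complex.normSq_eq_conj_mul_self, Complex.ofReal_sum]

lemma quad_form_eq {n : Type*} [Fintype n] (W : Matrix n n ℂ) (u : n → ℂ) :
    dotProduct (star u) ((Wᴴ * W) *ᵥ u)
      = ((∑ i, Complex.normSq ((W *ᵥ u) i) : ℝ) : ℂ) := by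
  rw [← Matrix.mulVec_mulVec, dotProduct_mulVec, ← Matrix.star_mulVec, star_dot_self]

lemma key_psd {ρ : Matrix (A × B × C) (A × B × C) ℂ} (hρ : ρ.PosSemidef) :
    (((Fintype.card C : ℝ)) • tensorId3 (ptraceThird ρ) - ρ).PosSemidef := by
  have hT : (tensorId3 (C := C) (ptraceThird ρ)).PosSemidef := by
    rw [sel_identity ρ]
    refine Finset.sum_induction _ _ (fun a b ha hb => ha.add hb) Matrix.PosSemidef.zero
      fun c _ => ?_
    exact Finset.sum_induction _ _ (fun a b ha hb => ha.add hb) Matrix.PosSemidef.zero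
      fun e _ => hρ.conjTranspose_mul_mul_same (selE c e)
  obtain ⟨W, hW⟩ := posSemidef_iff_eq_transpose_mul_self'.mp hρ
  refine Matrix.posSemidef_iff_dotProduct_mulVec.mpr ⟨?_, fun x => ?_⟩
  · have h1 : (((Fintype.card C : ℝ)) • tensorId3 (C := C) (ptraceThird ρ)).IsHermitian := by
      unfold Matrix.IsHermitian
      rw [Matrix.conjTranspose_smul, star_trivial, hT.1]
    exact h1.sub hρ.1
  · have hx : x = ∑ c : C, (selE c c) *ᵥ x := by
      rw [← my_sum_mulVec, selE_diag_sum, Matrix.one_mulVec]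
    set w : C → C → (A × B × C) → ℂ := fun c e => W *ᵥ ((selE c e) *ᵥ x) with hw
    have hterm : ∀ c e : C, dotProduct (star x) (((selE c e)ᴴ * ρ * (selE c e)) *ᵥ x)
        = ((∑ i, Complex.normSq (w c e i) : ℝ) : ℂ) := by
      intro c e
      rw [← Matrix.mulVec_mulVec, ← Matrix.mulVec_mulVec, dotProduct_mulVec,
        ← Matrix.star_mulVec, hW, quad_form_eq]
    have hTform : dotProduct (star x) (tensorId3 (C := C) (ptraceThird ρ) *ᵥ x)
        = ((∑ c : C, ∑ e : C, ∑ i, Complex.normSq (w c e i) : ℝ) : ℂ) := by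
      rw [sel_identity ρ, my_sum_mulVec, my_dot_sum]
      push_cast
      refine Finset.sum_congr rfl fun c _ => ?_
      rw [my_sum_mulVec, my_dot_sum]
      exact Finset.sum_congr rfl fun e _ => by rw [hterm c e]; push_cast; rfl
    have hρform : dotProduct (star x) (ρ *ᵥ x)
        = ((∑ i, Complex.normSq ((∑ c : C, w c c) i) : ℝ) : ℂ) := by
      conv_lhs => rw [hx, hW, quad_form_eq]
      rw [my_mulVec_sum]
    have h1 : ∀ i, Complex.normSq ((∑ c : C, w c c) i)
        ≤ (Fintype.card C : ℝ) * ∑ c : C, Complex.normSq (w c c i) := by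
      intro i
      rw [Finset.sum_apply]
      calc Complex.normSq (∑ c : C, w c c i) = ‖∑ c : C, w c c i‖ ^ 2 := by
            rw [← Complex.sq_norm]
        _ ≤ (∑ c : C, ‖w c c i‖) ^ 2 := by
            exact pow_le_pow_left₀ (norm_nonneg _) (norm_sum_le _ _) 2
        _ ≤ (Finset.univ (α := C)).card * ∑ c : C, ‖w c c i‖ ^ 2 := sq_sum_le_card_mul_sum_sq
        _ = (Fintype.card C : ℝ) * ∑ c : C, Complex.normSq (w c c i) := by
            rw [Finset.card_univ]
            congr 1
            exact Finset.sum_congr rfl fun c _ => by rw [← Complex.sq_norm]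
    have key : (∑ i, Complex.normSq ((∑ c : C, w c c) i))
        ≤ (Fintype.card C : ℝ) * ∑ c : C, ∑ e : C, ∑ i, Complex.normSq (w c e i) := by
      calc (∑ i, Complex.normSq ((∑ c : C, w c c) i))
          ≤ ∑ i, (Fintype.card C : ℝ) * ∑ c : C, Complex.normSq (w c c i) :=
            Finset.sum_le_sum fun i _ => h1 i
        _ = (Fintype.card C : ℝ) * ∑ c : C, ∑ i, Complex.normSq (w c c i) := by
            rw [← Finset.mul_sum]
            congr 1
            exact Finset.sum_comm
        _ ≤ (Fintype.card C : ℝ) * ∑ c : C, ∑ e : C, ∑ i, Complex.normSq (w c e i) := by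
            refine mul_le_mul_of_nonneg_left ?_ (Nat.cast_nonneg _)
            refine Finset.sum_le_sum fun c _ => ?_
            exact Finset.single_le_sum
              (fun e _ => Finset.sum_nonneg fun i _ => Complex.normSq_nonneg _)
              (Finset.mem_univ c)
    rw [Matrix.sub_mulVec, dotProduct_sub, Matrix.smul_mulVec,
      dotProduct_smul, hTform, hρform, Complex.real_smul, ← Complex.ofReal_mul,
      ← Complex.ofReal_sub]
    rw [Complex.zero_le_real]
    linarith [key]

lemma sep_lift [Nonempty C] {σ : Matrix (A × B) (A × B) ℂ} (hσ : IsSepState σ) :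
    IsSepState (A := A) (B := B × C) ((Fintype.card C : ℝ)⁻¹ • tensorId3 σ) := by
  obtain ⟨k, p, τ₁, τ₂, hp, hsum, h1, h2, hdecomp⟩ := hσ
  refine ⟨k, p, τ₁, fun i => τ₂ i ⊗ₖ ((Fintype.card C : ℝ)⁻¹ • (1 : Matrix C C ℂ)),
    hp, hsum, h1, fun i => ⟨?_, ?_⟩, ?_⟩
  · exact psd_kron' (h2 i).1 (psd_smul'_s12 Matrix.PosDef.one.posSemidef (by positivity))
  · rw [Matrix.trace_kronecker, (h2 i).2, one_mul, Matrix.trace_smul, Matrix.trace_one,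
      Complex.real_smul]
    rw [← Complex.ofReal_natCast, ← Complex.ofReal_mul]
    rw [inv_mul_cancel₀ (by exact_mod_cast Fintype.card_ne_zero)]
    exact Complex.ofReal_one
  · subst hdecomp
    ext ⟨a, bc⟩ ⟨a', bc'⟩
    simp only [Matrix.smul_apply, tensorId3_apply', Matrix.sum_apply, Matrix.kroneckerMap_apply,
      Matrix.one_apply, Finset.sum_apply, smul_eq_mul, Complex.real_smul]
    rw [Finset.sum_mul]
    rw [Finset.mul_sum]
    refine Finset.sum_congr rfl fun i _ => ?_
    simp only [Matrix.smul_apply, Matrix.kroneckerMap_apply, smul_eq_mul, Complex.real_smul,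
      mul_ite, mul_zero, mul_one]
    by_cases h : bc.2 = bc'.2 <;> simp [h] <;> ring

end AuxNonLock

set_option maxHeartbeats 1000000 in
/-- **Non-lockability of the max-relative entropy of entanglement**:
`E_max^{A:BB'}(ρ_{ABB'}) − E_max^{A:B}(ρ_{AB}) ≤ 2·log₂(d_{B'})`. -/
theorem emax_non_lockability
    {dA dB dB' : ℕ}
    (ρ : Matrix (Fin dA × Fin dB × Fin dB') (Fin dA × Fin dB × Fin dB') ℂ)
    (hρ : IsState ρ) :
    EmaxState ρ - EmaxState (ptraceThird ρ) ≤ ((2 * Real.logb 2 dB' : ℝ) : EReal) := by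
  classical
  by_cases hd : dB' = 0
  · exfalso
    subst hd
    have h0 : ρ.trace = 0 := by
      simp [Matrix.trace, Fintype.sum_prod_type]
    rw [hρ.2] at h0
    exact one_ne_zero h0
  · haveI : Nonempty (Fin dB') := ⟨⟨0, Nat.pos_of_ne_zero hd⟩⟩
    have hdpos : (0 : ℝ) < (dB' : ℝ) := by exact_mod_cast Nat.pos_of_ne_zero hd
    set K : ℝ := 2 * Real.logb 2 dB' with hK
    suffices h : EmaxState ρ - ((K : ℝ) : EReal) ≤ EmaxState (ptraceThird ρ) by
      have h2 : EmaxState ρ ≤ EmaxState (ptraceThird ρ) + ((K : ℝ) : EReal) :=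
        (EReal.sub_le_iff_le_add (Or.inl (EReal.coe_ne_bot K))
          (Or.inl (EReal.coe_ne_top K))).mp h
      exact EReal.sub_le_of_le_add' h2
    refine le_iInf fun σ => ?_
    refine le_iInf fun c => ?_
    rw [EReal.sub_le_iff_le_add (Or.inl (EReal.coe_ne_bot K)) (Or.inl (EReal.coe_ne_top K))]
    obtain ⟨hcpos, hcpsd⟩ := c.2
    -- the lifted separable state
    obtain ⟨σ', hσ'⟩ : ∃ m : Matrix (Fin dA × Fin dB × Fin dB') (Fin dA × Fin dB × Fin dB') ℂ,
        m = ((Fintype.card (Fin dB') : ℝ)⁻¹ •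
          tensorId3 (σ : Matrix (Fin dA × Fin dB) (Fin dA × Fin dB) ℂ)) := ⟨_, rfl⟩
    have hsep : IsSepState (A := Fin dA) (B := Fin dB × Fin dB') σ' := hσ' ▸ sep_lift σ.2
    have hc'pos : (0 : ℝ) < (c : ℝ) * (dB' : ℝ) ^ 2 := by positivity
    have hpsd : ((((c : ℝ) * (dB' : ℝ) ^ 2) : ℝ) • σ' - ρ).PosSemidef := by
      have hdecomp : (((c : ℝ) * (dB' : ℝ) ^ 2) : ℝ) • σ' - ρ
          = (dB' : ℝ) • tensorId3 ((c : ℝ) • (σ : Matrix (Fin dA × Fin dB) (Fin dA × Fin dB) ℂ)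
              - ptraceThird ρ)
            + (((Fintype.card (Fin dB') : ℝ)) • tensorId3 (ptraceThird ρ) - ρ) := by
        rw [tensorId3_sub', tensorId3_smul', hσ', Fintype.card_fin]
        match_scalars
        all_goals (field_simp; try ring)
      rw [hdecomp]
      exact (psd_smul'_s12 (tensorId3_psd' hcpsd) hdpos.le).add (key_psd hρ.1)
    have step1 : EmaxState ρ ≤ Dmax ρ σ' := by
      have h := iInf_le (fun σs : {σs : Matrix (Fin dA × Fin dB × Fin dB')
          (Fin dA × Fin dB × Fin dB') ℂ // IsSepState σs} =>
          Dmax ρ (σs : Matrix (Fin dA × Fin dB × Fin dB') (Fin dA × Fin dB × Fin dB') ℂ))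
        ⟨σ', hsep⟩
      exact h
    have step2 : Dmax ρ σ' ≤ ((Real.logb 2 ((c : ℝ) * (dB' : ℝ) ^ 2) : ℝ) : EReal) := by
      have h := iInf_le (fun cc : {cc : ℝ // 0 < cc ∧ ((cc : ℝ) • σ' - ρ).PosSemidef} =>
          ((Real.logb 2 (cc : ℝ) : ℝ) : EReal)) ⟨(c : ℝ) * (dB' : ℝ) ^ 2, hc'pos, hpsd⟩
      exact h
    refine (step1.trans step2).trans ?_
    rw [Real.logb_mul (ne_of_gt hcpos) (by positivity), Real.logb_pow]
    rw [← EReal.coe_add]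
    exact EReal.coe_le_coe_iff.mpr (by rw [hK]; norm_num)
end

section
/- Non-lockability for channels: Let T : M_{d_A}(ℂ) → M_{d_B}(ℂ) ⊗ M_{d_C}(ℂ) be a quantum channel with output on ℂ^{d_B} ⊗ ℂ^{d_C}, and let T' = tr_C ∘ T : M_{d_A}(ℂ) → M_{d_B}(ℂ) be the reduced channel obtained by tracing out the C part of the output. Then E_max(T) ≤ 2·log₂(d_C) + E_max(T'), where in E_max(T) the output of T on a bipartite input state ρ_{A'A} is measured across the bipartition A' : BC, and in E_max(T') across A' : B. -/
open Matrix
open scoped Kronecker ComplexOrder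
attribute [local instance] Classical.propDecidable

private lemma ereal_le_add_iInf (K : ℝ) {ι : Sort*} (f : ι → EReal) {x : EReal}
    (h : ∀ i, x ≤ (K : EReal) + f i) : x ≤ (K : EReal) + ⨅ i, f i := by
  have h' : ∀ i, x - (K : EReal) ≤ f i := fun i =>
    (EReal.sub_le_iff_le_add (Or.inl (EReal.coe_ne_bot K)) (Or.inl (EReal.coe_ne_top K))).mpr
      ((h i).trans_eq (add_comm _ _))
  have h2 : x - (K : EReal) ≤ ⨅ i, f i := le_iInf h'
  exact ((EReal.sub_le_iff_le_add (Or.inl (EReal.coe_ne_bot K))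
    (Or.inl (EReal.coe_ne_top K))).mp h2).trans_eq (add_comm _ _)

private lemma psd_real_smul {n : Type*} [Fintype n] {A : Matrix n n ℂ} (hA : A.PosSemidef)
    {r : ℝ} (hr : 0 ≤ r) : (r • A).PosSemidef := by
  refine Matrix.PosSemidef.of_dotProduct_mulVec_nonneg ?_ ?_
  · rw [Matrix.IsHermitian, Matrix.conjTranspose_smul, star_trivial, hA.1]
  · intro x
    rw [Matrix.smul_mulVec, dotProduct_smul, Complex.real_smul]
    exact mul_nonneg (by exact_mod_cast Complex.zero_le_real.mpr hr) (hA.dotProduct_mulVec_nonneg x)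

private lemma conjTranspose_kron {m n p q : Type*} (P : Matrix m n ℂ) (Q : Matrix p q ℂ) :
    (P ⊗ₖ Q)ᴴ = Pᴴ ⊗ₖ Qᴴ := by
  ext x y
  simp [Matrix.conjTranspose_apply, Matrix.kroneckerMap_apply, star_mul']

open scoped MatrixOrder Matrix.Norms.L2Operator in
private lemma psd_eq_ct_mul_self {n : Type*} [Fintype n] {A : Matrix n n ℂ}
    (hA : A.PosSemidef) : ∃ B : Matrix n n ℂ, A = Bᴴ * B := by
  classical
  obtain ⟨B, hB⟩ := CStarAlgebra.nonneg_iff_eq_star_mul_self.mp hA.nonneg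
  exact ⟨B, hB⟩

private lemma kron_psd {m n : Type*} [Fintype m] [Fintype n] {A : Matrix m m ℂ}
    {B : Matrix n n ℂ} (hA : A.PosSemidef) (hB : B.PosSemidef) : (A ⊗ₖ B).PosSemidef := by
  obtain ⟨P, rfl⟩ := psd_eq_ct_mul_self hA
  obtain ⟨Q, rfl⟩ := psd_eq_ct_mul_self hB
  have h : (Pᴴ * P) ⊗ₖ (Qᴴ * Q) = (P ⊗ₖ Q)ᴴ * (P ⊗ₖ Q) := by
    rw [conjTranspose_kron, Matrix.mul_kronecker_mul]
  rw [h]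
  exact Matrix.posSemidef_conjTranspose_mul_self _

private def pattM {R B C : Type*} [DecidableEq C] (A : Matrix (R × B) (R × B) ℂ) :
    Matrix (R × B × C) (R × B × C) ℂ :=
  Matrix.of fun x y => if x.2.2 = y.2.2 then A (x.1, x.2.1) (y.1, y.2.1) else 0

private lemma sqform {m n : Type*} [Fintype m] [Fintype n] (A : Matrix m n ℂ) (v : n → ℂ) :
    dotProduct (star v) ((Aᴴ * A).mulVec v)
      = ((∑ i, Complex.normSq ((A.mulVec v) i) : ℝ) : ℂ) := by
  rw [← Matrix.mulVec_mulVec, Matrix.dotProduct_mulVec, Matrix.vecMul_conjTranspose, star_star]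
  simp [dotProduct, Complex.normSq_eq_conj_mul_self]

private lemma normSq_sum_le {C : Type*} [Fintype C] (z : C → ℂ) :
    Complex.normSq (∑ c, z c) ≤ (Fintype.card C : ℝ) * ∑ c, Complex.normSq (z c) := by
  have h1 : ‖∑ c, z c‖ ≤ ∑ c, ‖z c‖ := norm_sum_le _ _
  calc Complex.normSq (∑ c, z c) = ‖∑ c, z c‖ ^ 2 := (Complex.sq_norm _).symm
    _ ≤ (∑ c, ‖z c‖) ^ 2 := by
        exact pow_le_pow_left₀ (norm_nonneg _) h1 2
    _ ≤ (Fintype.card C : ℝ) * ∑ c, ‖z c‖ ^ 2 := by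
        simpa [Finset.card_univ] using
          (sq_sum_le_card_mul_sum_sq (s := Finset.univ) (f := fun c => ‖z c‖))
    _ = (Fintype.card C : ℝ) * ∑ c, Complex.normSq (z c) := by simp [Complex.sq_norm]

private lemma patt_psd {R B C : Type*} [Fintype R] [Fintype B] [Fintype C] [DecidableEq C]
    {A : Matrix (R × B) (R × B) ℂ} (hA : A.PosSemidef) : (pattM (C := C) A).PosSemidef := by
  obtain ⟨E, rfl⟩ := psd_eq_ct_mul_self hA
  set F : Matrix ((R × B) × C) (R × B × C) ℂ :=
    Matrix.of fun j y => if y.2.2 = j.2 then E j.1 (y.1, y.2.1) else 0 with hF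
  have h : pattM (C := C) (Eᴴ * E) = Fᴴ * F := by
    ext x y
    have hR : (Fᴴ * F) x y = ∑ j : R × B, ∑ c : C, star (F (j, c) x) * F (j, c) y := by
      rw [Matrix.mul_apply, Fintype.sum_prod_type]
      simp [Matrix.conjTranspose_apply]
    have hinner : ∀ j : R × B, (∑ c : C, star (F (j, c) x) * F (j, c) y)
        = if x.2.2 = y.2.2 then star (E j (x.1, x.2.1)) * E j (y.1, y.2.1) else 0 := by
      intro j
      simp only [hF, Matrix.of_apply]
      by_cases hc : x.2.2 = y.2.2
      · rw [if_pos hc, ← hc]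
        rw [Finset.sum_congr rfl (fun c _ => ?_), Finset.sum_ite_eq Finset.univ x.2.2
          (fun _ => star (E j (x.1, x.2.1)) * E j (y.1, y.2.1)), if_pos (Finset.mem_univ _)]
        by_cases h1 : x.2.2 = c <;> simp [h1, ← hc]
      · rw [if_neg hc]
        refine Finset.sum_eq_zero fun c _ => ?_
        by_cases h1 : x.2.2 = c <;> by_cases h2 : y.2.2 = c <;> simp [h1, h2]
        exact absurd (h1.trans h2.symm) hc
    rw [hR, Finset.sum_congr rfl fun j _ => hinner j]
    simp only [pattM, Matrix.of_apply, Matrix.mul_apply, Matrix.conjTranspose_apply]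
    split_ifs with hc
    · rfl
    · exact (Finset.sum_const_zero).symm
  rw [h]
  exact Matrix.posSemidef_conjTranspose_mul_self _

private lemma pinch_psd {R B C : Type*} [Fintype R] [Fintype B] [Fintype C] [DecidableEq C]
    {M : Matrix (R × B × C) (R × B × C) ℂ} (hM : M.PosSemidef) :
    ((Fintype.card C : ℝ) • pattM (C := C)
        (Matrix.of fun x y : R × B => ∑ c : C, M (x.1, x.2, c) (y.1, y.2, c)) - M).PosSemidef := by
  obtain ⟨Bm, rfl⟩ := psd_eq_ct_mul_self hM
  set Lm : Matrix ((R × B × C) × C × C) (R × B × C) ℂ :=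
    Matrix.of fun j y => if y.2.2 = j.2.2 then Bm j.1 (y.1, y.2.1, j.2.1) else 0 with hLm
  have hNL : pattM (C := C)
      (Matrix.of fun x y : R × B => ∑ c : C, (Bmᴴ * Bm) (x.1, x.2, c) (y.1, y.2, c))
      = Lmᴴ * Lm := by
    ext x y
    have hR : (Lmᴴ * Lm) x y
        = ∑ m : R × B × C, ∑ k : C, ∑ c₀ : C, star (Lm (m, k, c₀) x) * Lm (m, k, c₀) y := by
      rw [Matrix.mul_apply, Fintype.sum_prod_type]
      simp [Fintype.sum_prod_type, Matrix.conjTranspose_apply]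
    have hinner : ∀ (m : R × B × C) (k : C),
        (∑ c₀ : C, star (Lm (m, k, c₀) x) * Lm (m, k, c₀) y)
        = if x.2.2 = y.2.2 then star (Bm m (x.1, x.2.1, k)) * Bm m (y.1, y.2.1, k) else 0 := by
      intro m k
      simp only [hLm, Matrix.of_apply]
      by_cases hc : x.2.2 = y.2.2
      · rw [if_pos hc, ← hc]
        rw [Finset.sum_congr rfl (fun c₀ _ => ?_), Finset.sum_ite_eq Finset.univ x.2.2
          (fun _ => star (Bm m (x.1, x.2.1, k)) * Bm m (y.1, y.2.1, k)),
          if_pos (Finset.mem_univ _)]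
        by_cases h1 : x.2.2 = c₀ <;> simp [h1, ← hc]
      · rw [if_neg hc]
        refine Finset.sum_eq_zero fun c₀ _ => ?_
        by_cases h1 : x.2.2 = c₀ <;> by_cases h2 : y.2.2 = c₀ <;> simp [h1, h2]
        exact absurd (h1.trans h2.symm) hc
    rw [hR]
    simp only [hinner]
    simp only [pattM, Matrix.of_apply, Matrix.mul_apply, Matrix.conjTranspose_apply]
    split_ifs with hc
    · rw [Finset.sum_comm]
    · exact (Finset.sum_eq_zero fun m _ => Finset.sum_const_zero).symm
  refine Matrix.PosSemidef.of_dotProduct_mulVec_nonneg ?_ ?_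
  · have h1 : (pattM (C := C) (Matrix.of fun x y : R × B =>
        ∑ c : C, (Bmᴴ * Bm) (x.1, x.2, c) (y.1, y.2, c))).IsHermitian := by
      rw [hNL]; exact Matrix.isHermitian_conjTranspose_mul_self _
    have h2 : ((Fintype.card C : ℝ) • pattM (C := C) (Matrix.of fun x y : R × B =>
        ∑ c : C, (Bmᴴ * Bm) (x.1, x.2, c) (y.1, y.2, c))).IsHermitian := by
      rw [Matrix.IsHermitian, Matrix.conjTranspose_smul, star_trivial, h1]
    exact h2.sub (Matrix.isHermitian_conjTranspose_mul_self _)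
  · intro x
    rw [Matrix.sub_mulVec, dotProduct_sub, hNL, Matrix.smul_mulVec,
      dotProduct_smul, sqform, sqform, Complex.real_smul, ← Complex.ofReal_mul,
      ← Complex.ofReal_sub, Complex.zero_le_real, sub_nonneg]
    set g : (R × B × C) → C → C → ℂ :=
      fun m c k => ∑ r : R, ∑ b : B, Bm m (r, b, k) * x (r, b, c) with hg
    have hLmv : ∀ j : (R × B × C) × C × C, (Lm.mulVec x) j = g j.1 j.2.2 j.2.1 := by
      intro j
      rw [Matrix.mulVec, dotProduct, Fintype.sum_prod_type]
      simp only [Fintype.sum_prod_type, hLm, Matrix.of_apply, hg]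
      refine Finset.sum_congr rfl fun r _ => Finset.sum_congr rfl fun b _ => ?_
      rw [Finset.sum_congr rfl (fun c _ => ?_),
        Finset.sum_ite_eq' Finset.univ j.2.2 (fun c => Bm j.1 (r, b, j.2.1) * x (r, b, c)),
        if_pos (Finset.mem_univ _)]
      by_cases h1 : c = j.2.2 <;> simp [h1]
    have hBmv : ∀ m : R × B × C, (Bm.mulVec x) m = ∑ c : C, g m c c := by
      intro m
      rw [Matrix.mulVec, dotProduct, Fintype.sum_prod_type]
      simp only [Fintype.sum_prod_type, hg]
      rw [Finset.sum_congr rfl fun r _ => Finset.sum_comm, Finset.sum_comm]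
    calc ∑ i, Complex.normSq (Bm.mulVec x i)
        = ∑ m : R × B × C, Complex.normSq (∑ c : C, g m c c) := by
          exact Finset.sum_congr rfl fun m _ => by rw [hBmv]
      _ ≤ ∑ m : R × B × C, (Fintype.card C : ℝ) * ∑ c : C, Complex.normSq (g m c c) := by
          exact Finset.sum_le_sum fun m _ => normSq_sum_le _
      _ ≤ ∑ m : R × B × C, (Fintype.card C : ℝ) * ∑ k : C, ∑ c₀ : C, Complex.normSq (g m c₀ k) := by
          refine Finset.sum_le_sum fun m _ => mul_le_mul_of_nonneg_left ?_ (Nat.cast_nonneg _)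
          refine Finset.sum_le_sum fun k _ => ?_
          exact Finset.single_le_sum (f := fun c₀ => Complex.normSq (g m c₀ k))
            (fun c₀ _ => Complex.normSq_nonneg _) (Finset.mem_univ k)
      _ = (Fintype.card C : ℝ) * ∑ i, Complex.normSq (Lm.mulVec x i) := by
          rw [← Finset.mul_sum]
          congr 1
          conv_rhs => rw [Fintype.sum_prod_type]
          refine Finset.sum_congr rfl fun m _ => ?_
          conv_rhs => rw [Fintype.sum_prod_type]
          exact Finset.sum_congr rfl fun k _ => Finset.sum_congr rfl fun c₀ _ => by rw [hLmv]

private lemma T_entry {A B : Type*} [Fintype A] [Fintype B] [DecidableEq A]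
    {T : Matrix A A ℂ → Matrix B B ℂ} (hlin : IsLinearMap ℂ T) (X : Matrix A A ℂ) (b b' : B) :
    T X b b' = ∑ a : A, ∑ a' : A, X a a' * T (Matrix.single a a' 1) b b' := by
  have hT : T = ⇑(IsLinearMap.mk' T hlin) := rfl
  conv_lhs => rw [Matrix.matrix_eq_sum_single X, hT, map_sum]
  rw [Matrix.sum_apply]
  refine Finset.sum_congr rfl fun a _ => ?_
  rw [map_sum, Matrix.sum_apply]
  refine Finset.sum_congr rfl fun a' _ => ?_
  have h1 : Matrix.single a a' (X a a') = X a a' • Matrix.single a a' 1 := by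
    rw [Matrix.smul_single, smul_eq_mul, mul_one]
  rw [h1, _root_.map_smul, Matrix.smul_apply, smul_eq_mul, ← hT]

private lemma applyRight_psd {R A B : Type*} [Fintype R] [Fintype A] [Fintype B] [DecidableEq A]
    [Nonempty A] {T : Matrix A A ℂ → Matrix B B ℂ} (hlin : IsLinearMap ℂ T)
    (hchoi : (choi T).PosSemidef) {ρ : Matrix (R × A) (R × A) ℂ} (hρ : ρ.PosSemidef) :
    (applyRight T ρ).PosSemidef := by
  obtain ⟨Lm, hLm⟩ := psd_eq_ct_mul_self hρ
  obtain ⟨Km, hKm⟩ := psd_eq_ct_mul_self hchoi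
  have hcard : (Fintype.card A : ℂ) ≠ 0 := by
    exact_mod_cast Nat.cast_ne_zero.mpr Fintype.card_ne_zero
  set W : Matrix ((R × A) × A × B) (R × B) ℂ :=
    Matrix.of fun j x => ∑ a : A, Lm j.1 (x.1, a) * Km j.2 (a, x.2) with hW
  have key : applyRight T ρ = (Fintype.card A : ℝ) • (Wᴴ * W) := by
    ext x y
    have h1 : applyRight T ρ x y
        = ∑ a : A, ∑ a' : A, ρ (x.1, a) (y.1, a') * T (Matrix.single a a' 1) x.2 y.2 := by
      rw [applyRight, Matrix.of_apply, T_entry hlin]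
      simp only [Matrix.of_apply]
    have h2 : ∀ a a' : A, T (Matrix.single a a' 1) x.2 y.2
        = (Fintype.card A : ℂ) * choi T (a, x.2) (a', y.2) := by
      intro a a'
      rw [choi, Matrix.of_apply, ← mul_assoc, mul_inv_cancel₀ hcard, one_mul]
    set t : (R × A) → (A × B) → A → A → ℂ := fun k m a a' =>
      (star (Lm k (x.1, a)) * Lm k (y.1, a')) * (star (Km m (a, x.2)) * Km m (a', y.2)) with ht
    have hterm : ∀ (k : R × A) (m : A × B),
        star (∑ a : A, Lm k (x.1, a) * Km m (a, x.2)) * (∑ a' : A, Lm k (y.1, a') * Km m (a', y.2))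
        = ∑ a : A, ∑ a' : A, t k m a a' := by
      intro k m
      rw [star_sum]
      rw [Finset.sum_mul_sum Finset.univ Finset.univ]
      refine Finset.sum_congr rfl fun a _ => Finset.sum_congr rfl fun a' _ => ?_
      rw [ht]; simp only [star_mul']
      ring
    have hRHS : ((Fintype.card A : ℝ) • (Wᴴ * W)) x y
        = (Fintype.card A : ℂ) * ∑ k : R × A, ∑ m : A × B, ∑ a : A, ∑ a' : A, t k m a a' := by
      rw [Matrix.smul_apply, Matrix.mul_apply, Complex.real_smul, Complex.ofReal_natCast]
      congr 1
      rw [Fintype.sum_prod_type]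
      refine Finset.sum_congr rfl fun k _ => Finset.sum_congr rfl fun m _ => ?_
      rw [Matrix.conjTranspose_apply, hW, Matrix.of_apply, Matrix.of_apply, hterm]
    have hLHS : ∑ a : A, ∑ a' : A, ρ (x.1, a) (y.1, a')
          * ((Fintype.card A : ℂ) * choi T (a, x.2) (a', y.2))
        = (Fintype.card A : ℂ) * ∑ a : A, ∑ a' : A, ∑ k : R × A, ∑ m : A × B, t k m a a' := by
      rw [Finset.mul_sum]
      refine Finset.sum_congr rfl fun a _ => ?_
      rw [Finset.mul_sum]
      refine Finset.sum_congr rfl fun a' _ => ?_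
      rw [hLm, hKm]
      simp only [Matrix.mul_apply, Matrix.conjTranspose_apply]
      rw [mul_left_comm, Finset.sum_mul_sum Finset.univ Finset.univ]
    simp only [h2] at h1
    rw [h1, hLHS, hRHS]
    congr 1
    -- 4-fold sum exchange
    have e1 : ∑ a : A, ∑ a' : A, ∑ k : R × A, ∑ m : A × B, t k m a a'
        = ∑ p : A × A, ∑ q : (R × A) × (A × B), t q.1 q.2 p.1 p.2 := by
      simp only [Fintype.sum_prod_type]
    have e2 : ∑ k : R × A, ∑ m : A × B, ∑ a : A, ∑ a' : A, t k m a a'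
        = ∑ q : (R × A) × (A × B), ∑ p : A × A, t q.1 q.2 p.1 p.2 := by
      simp only [Fintype.sum_prod_type]
    rw [e1, e2, Finset.sum_comm]
  rw [key]
  exact psd_real_smul (Matrix.posSemidef_conjTranspose_mul_self _) (Nat.cast_nonneg _)


/-- **Non-lockability for channels**: tracing out a `d_C`-dimensional part of the output,
`E_max(T) ≤ 2·log₂(d_C) + E_max(tr_C ∘ T)`. -/
theorem emax_channel_non_lockability
    {dA dB dC : ℕ}
    (T : Matrix (Fin dA) (Fin dA) ℂ → Matrix (Fin dB × Fin dC) (Fin dB × Fin dC) ℂ)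
    (hT : IsQChannel T) :
    EmaxChan T ≤ ((2 * Real.logb 2 dC : ℝ) : EReal) +
      EmaxChan (fun X => ptraceSnd (T X)) := by

  unfold EmaxChan
  refine iSup_le fun dR => iSup_le fun ρ => ?_
  rcases Nat.eq_zero_or_pos dA with hdA0 | hdA
  · exfalso
    have htr := ρ.2.2
    subst hdA0
    simp [Matrix.trace] at htr
  rcases Nat.eq_zero_or_pos dC with hdC0 | hdC
  · exfalso
    subst hdC0
    have h1 := hT.2.1 1
    have h2 : (T 1).trace = 0 := by simp [Matrix.trace]
    rw [h2, Matrix.trace_one] at h1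
    have : (Fintype.card (Fin dA) : ℂ) ≠ 0 := by
      simp only [Fintype.card_fin]
      exact_mod_cast Nat.cast_ne_zero.mpr (Nat.pos_iff_ne_zero.mp hdA)
    exact this h1.symm
  have hNeA : Nonempty (Fin dA) := ⟨⟨0, hdA⟩⟩
  have hρout : (applyRight T (ρ : Matrix (Fin dR × Fin dA) (Fin dR × Fin dA) ℂ)).PosSemidef :=
    applyRight_psd hT.1 hT.2.2 ρ.2.1
  have hstep2 : EmaxState (applyRight (fun X => ptraceSnd (T X))
      (ρ : Matrix (Fin dR × Fin dA) (Fin dR × Fin dA) ℂ))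
      ≤ EmaxChan fun X => ptraceSnd (T X) :=
    le_iSup_of_le dR (le_iSup_of_le ρ le_rfl)
  refine le_trans ?_ (add_le_add_right hstep2 _)
  unfold EmaxState Dmax
  refine ereal_le_add_iInf _ _ fun σ' => ?_
  refine ereal_le_add_iInf _ _ fun cc => ?_
  obtain ⟨c, hc, hcPSD⟩ := cc
  obtain ⟨σ'm, hσ'sep⟩ := σ'
  simp only at hcPSD hc ⊢
  obtain ⟨kk, p, τ₁, τ₂, hp0, hp1, hτ₁, hτ₂, hσ'eq⟩ := hσ'sep
  set μ : Matrix (Fin dC) (Fin dC) ℂ := ((dC : ℝ)⁻¹) • 1 with hμ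
  have hdCR : (0:ℝ) < (dC : ℝ) := by exact_mod_cast hdC
  have hμstate : IsState μ := by
    constructor
    · exact psd_real_smul Matrix.PosSemidef.one (by positivity)
    · rw [hμ, Matrix.trace_smul, Matrix.trace_one, Fintype.card_fin]
      rw [Complex.real_smul]
      push_cast
      field_simp
  set σS : Matrix (Fin dR × Fin dB × Fin dC) (Fin dR × Fin dB × Fin dC) ℂ :=
    ∑ i, (p i : ℂ) • (τ₁ i ⊗ₖ (τ₂ i ⊗ₖ μ)) with hσS
  have hsep : IsSepState σS := by
    refine ⟨kk, p, τ₁, fun i => τ₂ i ⊗ₖ μ, hp0, hp1, hτ₁, fun i => ?_, hσS⟩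
    refine ⟨kron_psd (hτ₂ i).1 hμstate.1, ?_⟩
    rw [Matrix.trace_kronecker, (hτ₂ i).2, hμstate.2, one_mul]
  have hσpatt : σS = (dC : ℝ)⁻¹ • pattM (C := Fin dC) σ'm := by
    rw [hσ'eq]
    ext x y
    simp only [hσS, Matrix.sum_apply, Matrix.smul_apply, Matrix.kroneckerMap_apply, pattM,
      Matrix.of_apply, hμ, Matrix.one_apply, smul_eq_mul, Complex.real_smul]
    by_cases hcc : x.2.2 = y.2.2
    · simp only [if_pos hcc, Matrix.sum_apply, Matrix.smul_apply, Matrix.kroneckerMap_apply,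
        smul_eq_mul, Complex.real_smul, Finset.mul_sum]
      exact Finset.sum_congr rfl fun i _ => by ring
    · simp only [if_neg hcc, mul_zero, mul_zero]
      exact Finset.sum_eq_zero fun i _ => by ring
  have hN : (Matrix.of fun x y : Fin dR × Fin dB =>
      ∑ c2 : Fin dC, applyRight T (ρ : Matrix (Fin dR × Fin dA) (Fin dR × Fin dA) ℂ)
        (x.1, x.2, c2) (y.1, y.2, c2))
      = applyRight (fun X => ptraceSnd (T X)) (ρ : Matrix (Fin dR × Fin dA) (Fin dR × Fin dA) ℂ) := by
    ext x y
    rfl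
  have hpinch : ((dC : ℝ) • pattM (C := Fin dC) (applyRight (fun X => ptraceSnd (T X))
      (ρ : Matrix (Fin dR × Fin dA) (Fin dR × Fin dA) ℂ))
      - applyRight T (ρ : Matrix (Fin dR × Fin dA) (Fin dR × Fin dA) ℂ)).PosSemidef := by
    have h := pinch_psd hρout
    rw [hN] at h
    simpa [Fintype.card_fin] using h
  have hkey : ((c * (dC : ℝ) ^ 2) • σS
        - applyRight T (ρ : Matrix (Fin dR × Fin dA) (Fin dR × Fin dA) ℂ))
      = (dC : ℝ) • pattM (C := Fin dC) ((c : ℝ) • σ'm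
          - applyRight (fun X => ptraceSnd (T X)) (ρ : Matrix (Fin dR × Fin dA) (Fin dR × Fin dA) ℂ))
        + ((dC : ℝ) • pattM (C := Fin dC) (applyRight (fun X => ptraceSnd (T X))
            (ρ : Matrix (Fin dR × Fin dA) (Fin dR × Fin dA) ℂ))
          - applyRight T (ρ : Matrix (Fin dR × Fin dA) (Fin dR × Fin dA) ℂ)) := by
    rw [hσpatt]
    ext x y
    simp only [Matrix.sub_apply, Matrix.add_apply, Matrix.smul_apply, pattM, Matrix.of_apply,
      smul_eq_mul, Complex.real_smul]
    have hdCne : (dC : ℂ) ≠ 0 := by exact_mod_cast hdC.ne'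
    split_ifs with h
    · push_cast
      field_simp
      ring
    · push_cast
      ring
  have hfeas : (((c * (dC : ℝ) ^ 2) : ℝ) • σS
      - applyRight T (ρ : Matrix (Fin dR × Fin dA) (Fin dR × Fin dA) ℂ)).PosSemidef := by
    rw [hkey]
    exact (psd_real_smul (patt_psd hcPSD) hdCR.le).add hpinch
  have hpos : (0:ℝ) < c * (dC : ℝ) ^ 2 := by positivity
  refine le_trans (iInf_le _ ⟨σS, hsep⟩) ?_
  refine le_trans (iInf_le _ ⟨c * (dC : ℝ) ^ 2, hpos, hfeas⟩) ?_
  have harith : Real.logb 2 (c * (dC : ℝ) ^ 2) = 2 * Real.logb 2 (dC : ℝ) + Real.logb 2 c := by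
    rw [Real.logb_mul (ne_of_gt hc) (by positivity), Real.logb_pow]
    ring
  rw [harith, EReal.coe_add]
end

section
/- Simplified upper bound via entanglement-breaking channels: Let T : M_{d_A}(ℂ) → M_{d_B}(ℂ) be a quantum channel and let S : M_{d_A}(ℂ) → M_{d_B}(ℂ) be an entanglement-breaking quantum channel, i.e. a quantum channel whose Choi matrix C_S = (id ⊗ S)(ω) is separable w.r.t. the bipartition A' : B. Then E_max(T) ≤ D_max(C_T ‖ C_S), where C_T is the Choi matrix of T. In particular E_max(T) ≤ B_max(T) := inf{D_max(C_T‖C_S) : S entanglement-breaking quantum channel from M_{d_A}(ℂ) to M_{d_B}(ℂ)}. -/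
open Matrix
open scoped Kronecker ComplexOrder
attribute [local instance] Classical.propDecidable

section AuxProofs

open scoped MatrixOrder Matrix.Norms.L2Operator in
lemma psd_exists_conj {n : Type*} [Fintype n] [DecidableEq n] {M : Matrix n n ℂ}
    (hM : M.PosSemidef) : ∃ B : Matrix n n ℂ, M = Bᴴ * B := by
  obtain ⟨B, hB⟩ := CStarAlgebra.nonneg_iff_eq_star_mul_self.mp hM.nonneg
  exact ⟨B, hB⟩

open Matrix

lemma sum4_comm {M : Type*} [AddCommMonoid M] {α β γ δ : Type*}
    [Fintype α] [Fintype β] [Fintype γ] [Fintype δ] (f : α → β → γ → δ → M) :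
    ∑ a, ∑ b, ∑ c, ∑ d, f a b c d = ∑ c, ∑ d, ∑ a, ∑ b, f a b c d := by
  rw [show (∑ a, ∑ b, ∑ c, ∑ d, f a b c d) = ∑ a, ∑ c, ∑ b, ∑ d, f a b c d from
    Finset.sum_congr rfl fun a _ => Finset.sum_comm]
  rw [Finset.sum_comm]
  rw [show (∑ c, ∑ a, ∑ b, ∑ d, f a b c d) = ∑ c, ∑ a, ∑ d, ∑ b, f a b c d from
    Finset.sum_congr rfl fun c _ => Finset.sum_congr rfl fun a _ => Finset.sum_comm]
  exact Finset.sum_congr rfl fun c _ => Finset.sum_comm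

lemma sum3_comm {M : Type*} [AddCommMonoid M] {α β γ : Type*}
    [Fintype α] [Fintype β] [Fintype γ] (f : α → β → γ → M) :
    ∑ a, ∑ b, ∑ c, f a b c = ∑ c, ∑ a, ∑ b, f a b c := by
  rw [show (∑ a, ∑ b, ∑ c, f a b c) = ∑ a, ∑ c, ∑ b, f a b c from
    Finset.sum_congr rfl fun a _ => Finset.sum_comm]
  exact Finset.sum_comm

variable {R A B : Type*} [Fintype R] [Fintype A] [Fintype B] [DecidableEq A]

lemma L_entry (L : Matrix A A ℂ → Matrix B B ℂ) (hL : IsLinearMap ℂ L)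
    (X : Matrix A A ℂ) (b b' : B) :
    L X b b' = ∑ a : A, ∑ a' : A, X a a' * L (Matrix.single a a' 1) b b' := by
  have hX : X = ∑ a : A, ∑ a' : A, X a a' • Matrix.single a a' (1 : ℂ) := by
    conv_lhs => rw [matrix_eq_sum_single X]
    refine Finset.sum_congr rfl fun a _ => Finset.sum_congr rfl fun a' _ => ?_
    rw [smul_single, smul_eq_mul, mul_one]
  have hmap : L (∑ a : A, ∑ a' : A, X a a' • Matrix.single a a' (1 : ℂ))
      = ∑ a : A, ∑ a' : A, X a a' • L (Matrix.single a a' (1 : ℂ)) := by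
    show (IsLinearMap.mk' L hL) (∑ a : A, ∑ a' : A, X a a' • Matrix.single a a' (1 : ℂ))
      = ∑ a : A, ∑ a' : A, X a a' • (IsLinearMap.mk' L hL) (Matrix.single a a' (1 : ℂ))
    rw [map_sum]
    refine Finset.sum_congr rfl fun a _ => ?_
    rw [map_sum]
    refine Finset.sum_congr rfl fun a' _ => ?_
    exact _root_.map_smul _ _ _
  conv_lhs => rw [hX]
  rw [hmap]
  simp [Matrix.sum_apply]

lemma choi_entry (L : Matrix A A ℂ → Matrix B B ℂ) (a a' : A) (b b' : B) :
    choi L (a, b) (a', b') = ((Fintype.card A : ℂ))⁻¹ * L (Matrix.single a a' 1) b b' :=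
  rfl

lemma L_entry_choi [Nonempty A] (L : Matrix A A ℂ → Matrix B B ℂ)
    (a a' : A) (b b' : B) :
    L (Matrix.single a a' 1) b b' = (Fintype.card A : ℂ) * choi L (a, b) (a', b') := by
  have hcard : (Fintype.card A : ℂ) ≠ 0 := by
    exact_mod_cast Nat.cast_ne_zero.mpr Fintype.card_ne_zero
  rw [choi_entry]
  field_simp

/-- Complete positivity from positivity of the Choi matrix. -/
lemma cp_psd [Nonempty A]
    (L : Matrix A A ℂ → Matrix B B ℂ) (hL : IsLinearMap ℂ L) (hC : (choi L).PosSemidef)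
    {ρ : Matrix (R × A) (R × A) ℂ} (hρ : ρ.PosSemidef) :
    (applyRight L ρ).PosSemidef := by
  obtain ⟨N, hN⟩ := psd_exists_conj hC
  obtain ⟨Bm, hBm⟩ := psd_exists_conj hρ
  set dc : ℂ := (Real.sqrt (Fintype.card A) : ℂ) with hdc
  have hd2 : dc * dc = (Fintype.card A : ℂ) := by
    rw [hdc, ← Complex.ofReal_mul, Real.mul_self_sqrt (by positivity)]
    norm_num
  have hstar : star dc = dc := by
    rw [hdc, Complex.star_def, Complex.conj_ofReal]
  set P : Matrix ((R × A) × (A × B)) (R × B) ℂ :=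
    Matrix.of fun mk x => dc * ∑ a : A, Bm mk.1 (x.1, a) * N mk.2 (a, x.2) with hP
  have key : applyRight L ρ = Pᴴ * P := by
    ext x y
    have lhs1 : applyRight L ρ x y
        = ∑ a : A, ∑ a' : A, ρ (x.1, a) (y.1, a')
            * ((Fintype.card A : ℂ) * choi L (a, x.2) (a', y.2)) := by
      show L (Matrix.of fun a a' => ρ (x.1, a) (y.1, a')) x.2 y.2 = _
      rw [L_entry L hL]
      exact Finset.sum_congr rfl fun a _ => Finset.sum_congr rfl fun a' _ => by
        rw [Matrix.of_apply, L_entry_choi L]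
    rw [lhs1]
    have hρe : ∀ u v, ρ u v = ∑ m : R × A, star (Bm m u) * Bm m v := by
      intro u v
      rw [hBm, Matrix.mul_apply]
      exact Finset.sum_congr rfl fun m _ => by rw [Matrix.conjTranspose_apply]
    have hCe : ∀ u v, choi L u v = ∑ k : A × B, star (N k u) * N k v := by
      intro u v
      rw [hN, Matrix.mul_apply]
      exact Finset.sum_congr rfl fun k _ => by rw [Matrix.conjTranspose_apply]
    have rhs1 : (Pᴴ * P) x y
        = ∑ m : R × A, ∑ k : A × B,
            (dc * dc) * ((∑ a : A, star (Bm m (x.1, a)) * star (N k (a, x.2)))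
              * (∑ a' : A, Bm m (y.1, a') * N k (a', y.2))) := by
      rw [Matrix.mul_apply, Fintype.sum_prod_type]
      refine Finset.sum_congr rfl fun m _ => Finset.sum_congr rfl fun k _ => ?_
      rw [Matrix.conjTranspose_apply, hP]
      simp only [Matrix.of_apply]
      rw [star_mul', hstar]
      rw [show star (∑ a : A, Bm (m, k).1 (x.1, a) * N (m, k).2 (a, x.2))
        = ∑ a : A, star (Bm (m, k).1 (x.1, a)) * star (N (m, k).2 (a, x.2)) by
          rw [star_sum]; exact Finset.sum_congr rfl fun a _ => star_mul' _ _]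
      ring
    rw [rhs1]
    calc
      ∑ a : A, ∑ a' : A, ρ (x.1, a) (y.1, a')
          * ((Fintype.card A : ℂ) * choi L (a, x.2) (a', y.2))
        = ∑ a : A, ∑ a' : A, ∑ m : R × A, ∑ k : A × B,
            (dc * dc) * ((star (Bm m (x.1, a)) * star (N k (a, x.2)))
              * (Bm m (y.1, a') * N k (a', y.2))) := by
          refine Finset.sum_congr rfl fun a _ => Finset.sum_congr rfl fun a' _ => ?_
          rw [hρe, hCe, hd2, Finset.mul_sum, Finset.sum_mul_sum]
          refine Finset.sum_congr rfl fun m _ => Finset.sum_congr rfl fun k _ => by ring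
      _ = ∑ m : R × A, ∑ k : A × B, ∑ a : A, ∑ a' : A,
            (dc * dc) * ((star (Bm m (x.1, a)) * star (N k (a, x.2)))
              * (Bm m (y.1, a') * N k (a', y.2))) := sum4_comm _
      _ = ∑ m : R × A, ∑ k : A × B,
            (dc * dc) * ((∑ a : A, star (Bm m (x.1, a)) * star (N k (a, x.2)))
              * (∑ a' : A, Bm m (y.1, a') * N k (a', y.2))) := by
          refine Finset.sum_congr rfl fun m _ => Finset.sum_congr rfl fun k _ => ?_
          rw [Finset.sum_mul_sum, Finset.mul_sum]
          refine Finset.sum_congr rfl fun a _ => ?_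
          rw [Finset.mul_sum]
  rw [key]
  exact Matrix.posSemidef_conjTranspose_mul_self P

lemma psd_smul_real {n : Type*} [Fintype n] {M : Matrix n n ℂ} (hM : M.PosSemidef)
    {c : ℝ} (hc : 0 ≤ c) : (((c : ℝ) : ℂ) • M).PosSemidef := by
  constructor
  · show (((c : ℝ) : ℂ) • M)ᴴ = _
    rw [Matrix.conjTranspose_smul, hM.1.eq]
    congr 1
    rw [Complex.star_def, Complex.conj_ofReal]
  · exact (hM.smul (a := ((c : ℝ) : ℂ)) (by exact_mod_cast hc)).2

lemma trace_applyRight (L : Matrix A A ℂ → Matrix B B ℂ)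
    (hStp : ∀ X, (L X).trace = X.trace) (ρ : Matrix (R × A) (R × A) ℂ) :
    (applyRight L ρ).trace = ρ.trace := by
  have : (applyRight L ρ).trace
      = ∑ r : R, (L (Matrix.of fun a a' => ρ (r, a) (r, a'))).trace := by
    rw [Matrix.trace, Fintype.sum_prod_type]
    refine Finset.sum_congr rfl fun r _ => ?_
    exact Finset.sum_congr rfl fun b _ => rfl
  rw [this]
  rw [Finset.sum_congr rfl fun r _ => hStp _]
  rw [Matrix.trace, Fintype.sum_prod_type]
  exact Finset.sum_congr rfl fun r _ => Finset.sum_congr rfl fun a _ => rfl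

/-- PSD matrices have nonnegative real trace, zero only for the zero matrix. -/
lemma psd_trace_exists {n : Type*} [Fintype n] {M : Matrix n n ℂ} (hM : M.PosSemidef) :
    ∃ t : ℝ, 0 ≤ t ∧ M.trace = (t : ℂ) ∧ (t = 0 → M = 0) := by
  obtain ⟨G, hG⟩ := psd_exists_conj hM
  refine ⟨∑ j : n, ∑ m : n, Complex.normSq (G m j),
    Finset.sum_nonneg fun j _ => Finset.sum_nonneg fun m _ => Complex.normSq_nonneg _, ?_, ?_⟩
  · rw [hG, Matrix.trace]
    push_cast
    refine Finset.sum_congr rfl fun j _ => ?_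
    rw [Matrix.diag_apply, Matrix.mul_apply]
    refine Finset.sum_congr rfl fun m _ => ?_
    rw [Matrix.conjTranspose_apply, Complex.star_def, ← Complex.normSq_eq_conj_mul_self]
  · intro ht
    have hG0 : G = 0 := by
      ext m j
      have h1 : ∀ j ∈ Finset.univ (α := n), 0 ≤ ∑ m : n, Complex.normSq (G m j) :=
        fun j _ => Finset.sum_nonneg fun m _ => Complex.normSq_nonneg _
      have h2 := (Finset.sum_eq_zero_iff_of_nonneg h1).mp ht j (Finset.mem_univ j)
      have h3 : ∀ m ∈ Finset.univ (α := n), 0 ≤ Complex.normSq (G m j) :=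
        fun m _ => Complex.normSq_nonneg _
      have h4 := (Finset.sum_eq_zero_iff_of_nonneg h3).mp h2 m (Finset.mem_univ m)
      simpa using Complex.normSq_eq_zero.mp h4
    rw [hG, hG0]
    simp

/-- Entanglement-breaking channels produce separable states. -/
lemma sep_applyRight {R : Type*} [Fintype R] [DecidableEq R] [Nonempty R] [Nonempty A]
    [DecidableEq B]
    (S : Matrix A A ℂ → Matrix B B ℂ) (hSlin : IsLinearMap ℂ S)
    (hStp : ∀ X, (S X).trace = X.trace) (hEB : IsSepState (choi S))
    {ρ : Matrix (R × A) (R × A) ℂ} (hρ : IsState ρ) :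
    IsSepState (applyRight S ρ) := by
  obtain ⟨k, p, τ1, τ2, hp0, hp1, hτ1, hτ2, hσ⟩ := hEB
  set Rm : Fin k → Matrix R R ℂ := fun i =>
    Matrix.of fun r r' => (Fintype.card A : ℂ) * ∑ a : A, ∑ a' : A, ρ (r, a) (r', a') * τ1 i a a'
    with hRm
  -- the Choi matrix entries
  have hCe : ∀ (a a' : A) (b b' : B),
      choi S (a, b) (a', b') = ∑ i, (p i : ℂ) * (τ1 i a a' * τ2 i b b') := by
    intro a a' b b'
    rw [hσ]
    rw [Matrix.sum_apply]
    refine Finset.sum_congr rfl fun i _ => ?_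
    rw [Matrix.smul_apply, Matrix.kroneckerMap_apply, smul_eq_mul]
  -- decomposition of the output state
  have hdecomp : applyRight S ρ = ∑ i, (p i : ℂ) • (Rm i ⊗ₖ τ2 i) := by
    ext x y
    show S (Matrix.of fun a a' => ρ (x.1, a) (y.1, a')) x.2 y.2 = _
    rw [L_entry S hSlin]
    have hterm : ∀ a a', (Matrix.of fun a a' => ρ (x.1, a) (y.1, a')) a a'
        * S (Matrix.single a a' 1) x.2 y.2
        = ∑ i, (p i : ℂ) * ((Fintype.card A : ℂ) * (ρ (x.1, a) (y.1, a') * τ1 i a a')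
            * τ2 i x.2 y.2) := by
      intro a a'
      rw [Matrix.of_apply, L_entry_choi S, hCe, Finset.mul_sum, Finset.mul_sum]
      exact Finset.sum_congr rfl fun i _ => by ring
    rw [Finset.sum_congr rfl fun a _ => Finset.sum_congr rfl fun a' _ => hterm a a']
    rw [sum3_comm fun a a' i => (p i : ℂ) * ((Fintype.card A : ℂ)
      * (ρ (x.1, a) (y.1, a') * τ1 i a a') * τ2 i x.2 y.2)]
    rw [Matrix.sum_apply]
    refine Finset.sum_congr rfl fun i _ => ?_
    rw [Matrix.smul_apply, Matrix.kroneckerMap_apply, smul_eq_mul, hRm]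
    simp only [Matrix.of_apply]
    simp only [Finset.mul_sum, Finset.sum_mul]
  -- positivity of the conditional matrices
  have hRpsd : ∀ i, (Rm i).PosSemidef := by
    intro i
    set Li : Matrix A A ℂ → Matrix Unit Unit ℂ := fun X =>
      Matrix.of fun _ _ => (Fintype.card A : ℂ) * ∑ a : A, ∑ a' : A, X a a' * τ1 i a a'
      with hLi
    have hLilin : IsLinearMap ℂ Li := by
      constructor
      · intro X Y
        ext u v
        simp only [hLi, Matrix.of_apply, Matrix.add_apply, add_mul, Finset.sum_add_distrib,
          mul_add]
      · intro c X
        ext u v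
        simp only [hLi, Matrix.of_apply, Matrix.smul_apply, smul_eq_mul, Finset.mul_sum]
        exact Finset.sum_congr rfl fun a _ => Finset.sum_congr rfl fun a' _ => by ring
    have hchoiLi : choi Li = (τ1 i).submatrix Prod.fst Prod.fst := by
      ext ⟨a, u⟩ ⟨a', u'⟩
      rw [choi_entry]
      simp only [hLi, Matrix.of_apply, Matrix.submatrix_apply]
      have hstd : ∑ b : A, ∑ b' : A, Matrix.single a a' (1 : ℂ) b b' * τ1 i b b'
          = τ1 i a a' := by
        have houter : ∀ b : A, ∑ b' : A, Matrix.single a a' (1 : ℂ) b b' * τ1 i b b'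
            = if b = a then τ1 i a a' else 0 := by
          intro b
          by_cases hb : b = a
          · subst hb
            rw [if_pos rfl]
            have hinner : ∀ b' : A, Matrix.single b a' (1 : ℂ) b b' * τ1 i b b'
                = if b' = a' then τ1 i b a' else 0 := by
              intro b'
              by_cases hb' : b' = a'
              · subst hb'
                rw [Matrix.single_apply_same, one_mul, if_pos rfl]
              · rw [Matrix.single_apply_of_ne (i := b) (j := a') (i' := b) (j' := b') (c := (1 : ℂ))
                  (by tauto), zero_mul,
                  if_neg hb']
            rw [Finset.sum_congr rfl fun b' _ => hinner b']
            simp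
          · rw [if_neg hb]
            refine Finset.sum_eq_zero fun b' _ => ?_
            rw [Matrix.single_apply_of_ne (i := a) (j := a') (i' := b) (j' := b') (c := (1 : ℂ))
              (by tauto), zero_mul]
        rw [Finset.sum_congr rfl fun b _ => houter b]
        simp
      rw [hstd]
      have hcard : (Fintype.card A : ℂ) ≠ 0 := by
        exact_mod_cast Nat.cast_ne_zero.mpr Fintype.card_ne_zero
      field_simp
    have hchoiPSD : (choi Li).PosSemidef := by
      rw [hchoiLi]; exact (hτ1 i).1.submatrix _
    have happ := cp_psd Li hLilin hchoiPSD hρ.1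
    have hRm_eq : Rm i = (applyRight Li ρ).submatrix (fun r : R => (r, ()))
        (fun r : R => (r, ())) := by
      ext r r'
      rfl
    rw [hRm_eq]
    exact happ.submatrix _
  -- trace bookkeeping
  choose t ht0 htr htz using fun i => psd_trace_exists (hRpsd i)
  have htot : ∑ i, p i * t i = 1 := by
    have h1 : (applyRight S ρ).trace = 1 := by rw [trace_applyRight S hStp, hρ.2]
    have h2 : (applyRight S ρ).trace = ∑ i, ((p i * t i : ℝ) : ℂ) := by
      rw [hdecomp, Matrix.trace_sum]
      refine Finset.sum_congr rfl fun i _ => ?_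
      rw [Matrix.trace_smul, Matrix.trace_kronecker, htr i, (hτ2 i).2, smul_eq_mul]
      push_cast
      ring
    have h3 : ((∑ i, p i * t i : ℝ) : ℂ) = 1 := by
      push_cast
      rw [← h1, h2]
      push_cast
      rfl
    exact_mod_cast h3
  have hcardR : ((Fintype.card R : ℝ) : ℂ) ≠ 0 := by
    exact_mod_cast Nat.cast_ne_zero.mpr Fintype.card_ne_zero
  refine ⟨k, fun i => p i * t i,
    fun i => if t i = 0 then (((Fintype.card R : ℝ)⁻¹ : ℝ) : ℂ) • 1
      else (((t i)⁻¹ : ℝ) : ℂ) • Rm i, τ2,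
    fun i => mul_nonneg (hp0 i) (ht0 i), htot, ?_, hτ2, ?_⟩
  · intro i
    dsimp only
    by_cases h : t i = 0
    · rw [if_pos h]
      constructor
      · exact psd_smul_real Matrix.PosSemidef.one (by positivity)
      · rw [Matrix.trace_smul, Matrix.trace_one, smul_eq_mul]
        push_cast
        field_simp
    · rw [if_neg h]
      constructor
      · exact psd_smul_real (hRpsd i) (inv_nonneg.mpr (ht0 i))
      · rw [Matrix.trace_smul, htr i, smul_eq_mul, ← Complex.ofReal_mul,
          inv_mul_cancel₀ h, Complex.ofReal_one]
  · rw [hdecomp]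
    refine Finset.sum_congr rfl fun i _ => ?_
    dsimp only
    by_cases h : t i = 0
    · rw [if_pos h, htz i h, h]
      simp
    · rw [if_neg h, Matrix.smul_kronecker, smul_smul]
      congr 1
      push_cast
      field_simp

end AuxProofs

/-- **Simplified upper bound via entanglement-breaking channels**: for any quantum channel `T`
and any entanglement-breaking quantum channel `S` (separable Choi matrix),
`E_max(T) ≤ D_max(C_T ‖ C_S)`; in particular `E_max(T) ≤ B_max(T)`. -/
theorem emax_le_bmax
    {dA dB : ℕ}
    (T S : Matrix (Fin dA) (Fin dA) ℂ → Matrix (Fin dB) (Fin dB) ℂ)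
    (hT : IsQChannel T) (hS : IsQChannel S) (hEB : IsSepState (choi S)) :
    EmaxChan T ≤ Dmax (choi T) (choi S) := by
  refine le_iInf fun cc => ?_
  obtain ⟨c, hc0, hcPSD⟩ := cc
  refine iSup_le fun dR => iSup_le fun ρs => ?_
  obtain ⟨ρ, hρ⟩ := ρs
  have hne : Nonempty (Fin dR × Fin dA) := by
    by_contra h
    rw [not_nonempty_iff] at h
    have h0 : ρ.trace = 0 := by
      rw [Matrix.trace]
      exact Finset.sum_of_isEmpty _
    rw [hρ.2] at h0
    exact one_ne_zero h0
  obtain ⟨x0⟩ := hne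
  haveI : Nonempty (Fin dA) := ⟨x0.2⟩
  haveI : Nonempty (Fin dR) := ⟨x0.1⟩
  set L : Matrix (Fin dA) (Fin dA) ℂ → Matrix (Fin dB) (Fin dB) ℂ :=
    fun X => ((c : ℝ) : ℂ) • S X - T X with hLdef
  have hLlin : IsLinearMap ℂ L := by
    constructor
    · intro X Y
      simp only [hLdef, hS.1.map_add, hT.1.map_add, smul_add]
      abel
    · intro r X
      simp only [hLdef, hS.1.map_smul, hT.1.map_smul, smul_sub, smul_comm r]
  have hchoiL : choi L = (c : ℝ) • choi S - choi T := by
    ext x y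
    simp only [choi, hLdef, Matrix.of_apply, Matrix.sub_apply, Matrix.smul_apply,
      smul_eq_mul, Complex.real_smul]
    ring
  have hchoiPSD : (choi L).PosSemidef := by rw [hchoiL]; exact hcPSD
  have hsep : IsSepState (applyRight S ρ) := sep_applyRight S hS.1 hS.2.1 hEB hρ
  refine iInf_le_of_le ⟨applyRight S ρ, hsep⟩ ?_
  have hPSD2 : ((c : ℝ) • applyRight S ρ - applyRight T ρ).PosSemidef := by
    have heq : (c : ℝ) • applyRight S ρ - applyRight T ρ = applyRight L ρ := by
      ext x y
      simp only [applyRight, hLdef, Matrix.of_apply, Matrix.sub_apply, Matrix.smul_apply,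
        smul_eq_mul, Complex.real_smul]
    rw [heq]
    exact cp_psd L hLlin hchoiPSD hρ.1
  exact iInf_le _ (⟨c, hc0, hPSD2⟩ :
    {c' : ℝ // 0 < c' ∧ ((c' : ℝ) • applyRight S ρ - applyRight T ρ).PosSemidef})
end

section
/- Flower-channel bound: Fix d ∈ ℕ, d ≥ 2. Let U_1 = I_d and let U_2 be the d×d quantum Fourier transform with entries (U_2)_{jk} = e^{2πijk/d}/√d. Define the flower state ρ^f on ℂ^d_A ⊗ ℂ²_{A'} ⊗ ℂ^d_B ⊗ ℂ²_{B'} by ρ^f = (1/(2d)) Σ_{i,k=1}^d Σ_{j,l=1}^2 ⟨k|U_l† U_j|i⟩ · |ii⟩⟨kk|_{AB} ⊗ |jj⟩⟨ll|_{A'B'}. Let T_f : M_{2d}(ℂ) → M_{2d}(ℂ) be the unique linear map (with input system AA' and output system BB') whose Choi matrix equals ρ^f. Then T_f is a quantum channel and E_max(T_f) ≤ 2, where in E_max the output is measured across the bipartition (reference system) : BB'. -/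
open Matrix
open scoped Kronecker ComplexOrder
attribute [local instance] Classical.propDecidable

noncomputable section FlowerProofAux

open Matrix Complex

private lemma ofReal_sqrt_mul_self' {x : ℝ} (hx : 0 ≤ x) :
    (Real.sqrt x : ℂ) * (Real.sqrt x : ℂ) = (x : ℂ) := by
  rw [← Complex.ofReal_mul, Real.mul_self_sqrt hx]

/-- Fourier matrix entries as integer powers of `exp (2πi/d)`. -/
private lemma fourierMat_apply' (d : ℕ) (j k : Fin d) :
    fourierMat d j k
      = Complex.exp (2 * (Real.pi : ℂ) * Complex.I / d) ^ ((((j:ℕ):ℤ)+1) * (((k:ℕ):ℤ)+1))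
        / (Real.sqrt d : ℂ) := by
  rw [fourierMat, Matrix.of_apply, ← Complex.exp_int_mul]
  congr 2
  push_cast
  ring

private lemma fourier_conjTranspose_mul_self {d : ℕ} (hd : d ≠ 0) :
    (fourierMat d)ᴴ * fourierMat d = 1 := by
  have hprim := Complex.isPrimitiveRoot_exp d hd
  set ζ := Complex.exp (2 * (Real.pi : ℂ) * Complex.I / d) with hζdef
  have hζ0 : ζ ≠ 0 := Complex.exp_ne_zero _
  have hconjζ : (starRingEnd ℂ) ζ = ζ⁻¹ := by
    rw [hζdef, ← Complex.exp_conj, ← Complex.exp_neg]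
    congr 1
    simp only [map_div₀, _root_.map_mul, Complex.conj_I, Complex.conj_ofReal, map_natCast,
      map_ofNat]
    ring
  ext k i
  rw [Matrix.mul_apply, Matrix.one_apply]
  have hterm : ∀ m : Fin d,
      (fourierMat d)ᴴ k m * fourierMat d m i
        = (ζ ^ ((((i:ℕ):ℤ)) - (((k:ℕ):ℤ)))) ^ ((m:ℕ) + 1) / (d : ℂ) := by
    intro m
    rw [Matrix.conjTranspose_apply, fourierMat_apply', fourierMat_apply',
      Complex.star_def, map_div₀, map_zpow₀, hconjζ, Complex.conj_ofReal, _root_.inv_zpow, ← _root_.zpow_neg,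
      div_mul_div_comm, ofReal_sqrt_mul_self' (Nat.cast_nonneg d),
      ← zpow_add₀ hζ0, ← zpow_natCast (ζ ^ (((i:ℕ):ℤ) - ((k:ℕ):ℤ))), ← _root_.zpow_mul]
    congr 1
    push_cast
    ring
  rw [Finset.sum_congr rfl fun m _ => hterm m, ← Finset.sum_div]
  by_cases hik : k = i
  · subst hik
    rw [if_pos rfl, sub_self, zpow_zero]
    simp only [one_pow, Finset.sum_const, Finset.card_univ, Fintype.card_fin, nsmul_eq_mul,
      mul_one]
    exact div_self (Nat.cast_ne_zero.mpr hd)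
  · rw [if_neg hik]
    set η := ζ ^ ((((i:ℕ):ℤ)) - (((k:ℕ):ℤ))) with hηdef
    have hη1 : η ≠ 1 := by
      intro h
      have hdvd := (hprim.zpow_eq_one_iff_dvd _).mp h
      have hi : (((i:ℕ):ℤ)) < d := by exact_mod_cast i.isLt
      have hk : (((k:ℕ):ℤ)) < d := by exact_mod_cast k.isLt
      have h0 : (((i:ℕ):ℤ)) - (((k:ℕ):ℤ)) = 0 := by
        refine Int.eq_zero_of_abs_lt_dvd hdvd ?_
        rw [abs_lt]
        omega
      have : (i:ℕ) = (k:ℕ) := by omega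
      exact hik (Fin.ext this.symm)
    have hηd : η ^ d = 1 := by
      calc η ^ d = ζ ^ (((((i:ℕ):ℤ)) - (((k:ℕ):ℤ))) * (d:ℤ)) := by
            rw [hηdef, ← zpow_natCast (ζ ^ ((((i:ℕ):ℤ)) - (((k:ℕ):ℤ)))), ← _root_.zpow_mul]
        _ = (ζ ^ ((d:ℕ):ℤ)) ^ ((((i:ℕ):ℤ)) - (((k:ℕ):ℤ))) := by
            rw [mul_comm, _root_.zpow_mul]
        _ = 1 := by rw [zpow_natCast, hprim.pow_eq_one, _root_.one_zpow]
    have hsum : ∑ m : Fin d, η ^ ((m:ℕ) + 1) = 0 := by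
      have h1 : ∑ m : Fin d, η ^ ((m:ℕ) + 1)
          = ∑ m ∈ Finset.range d, η ^ (m + 1) :=
        Fin.sum_univ_eq_sum_range (fun t => η ^ (t + 1)) d
      have h2 : ∑ m ∈ Finset.range d, η ^ (m + 1)
          = (∑ m ∈ Finset.range d, η ^ m) * η := by
        rw [Finset.sum_mul]
        exact Finset.sum_congr rfl fun m _ => (pow_succ η m)
      rw [h1, h2, geom_sum_eq hη1, hηd]
      simp
    rw [hsum, zero_div]

private lemma flowerU_mul {d : ℕ} (hd : d ≠ 0) (l : Fin 2) :
    (flowerU d l)ᴴ * flowerU d l = 1 := by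
  by_cases hl : l = 0
  · simp [flowerU, hl]
  · simp only [flowerU, if_neg hl]
    exact fourier_conjTranspose_mul_self hd

end FlowerProofAux
noncomputable section FlowerGram

open Matrix Complex

/-- Rows of the Gram decompositions of the flower state, with sign `s`. -/
private def Wsgn (d : ℕ) (s : Fin 2) : Matrix (Fin d) ((Fin d × Fin 2) × (Fin d × Fin 2)) ℂ :=
  Matrix.of fun m x =>
    if x.2 = x.1 then
      (-1 : ℂ) ^ ((s : ℕ) * (x.1.2 : ℕ)) * (starRingEnd ℂ) (flowerU d x.1.2 m x.1.1)
        / (Real.sqrt (2 * d) : ℂ)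
    else 0

private lemma Wsgn_gram (d : ℕ) (hd : d ≠ 0) (s : Fin 2)
    (x y : (Fin d × Fin 2) × (Fin d × Fin 2)) :
    ((Wsgn d s)ᴴ * Wsgn d s) x y =
      if x.2 = x.1 ∧ y.2 = y.1 then
        ((-1 : ℂ) ^ ((s : ℕ) * (x.1.2 : ℕ)) * (-1 : ℂ) ^ ((s : ℕ) * (y.1.2 : ℕ))) *
          ((1 / (2 * (d : ℂ))) * (((flowerU d y.1.2)ᴴ * flowerU d x.1.2) y.1.1 x.1.1))
      else 0 := by
  have h2d : (0:ℝ) ≤ 2 * d := by positivity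
  rw [Matrix.mul_apply]
  by_cases hx : x.2 = x.1
  · by_cases hy : y.2 = y.1
    · rw [if_pos ⟨hx, hy⟩, Matrix.mul_apply, Finset.mul_sum, Finset.mul_sum]
      refine Finset.sum_congr rfl fun m _ => ?_
      simp only [Matrix.conjTranspose_apply, Wsgn, Matrix.of_apply, if_pos hx, if_pos hy,
        Complex.star_def, map_div₀, _root_.map_mul, map_pow, map_neg, _root_.map_one,
        Complex.conj_conj, Complex.conj_ofReal]
      rw [div_mul_div_comm, ofReal_sqrt_mul_self' h2d]
      push_cast
      ring
    · rw [if_neg (by tauto)]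
      refine Finset.sum_eq_zero fun m _ => ?_
      rw [Wsgn, Matrix.of_apply, if_neg hy, mul_zero]
  · rw [if_neg (by tauto)]
    refine Finset.sum_eq_zero fun m _ => ?_
    rw [Matrix.conjTranspose_apply, Wsgn, Matrix.of_apply, if_neg hx, star_zero, zero_mul]

private lemma flower_gram (d : ℕ) (hd : d ≠ 0) :
    flowerState d = (Wsgn d 0)ᴴ * Wsgn d 0 := by
  ext x y
  rw [Wsgn_gram d hd 0, flowerState, Matrix.of_apply]
  by_cases hx : x.2 = x.1
  · by_cases hy : y.2 = y.1
    · rw [if_pos (⟨congrArg Prod.fst hx, congrArg Prod.snd hx, congrArg Prod.fst hy,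
        congrArg Prod.snd hy⟩ : _ ∧ _ ∧ _ ∧ _), if_pos ⟨hx, hy⟩]
      simp
    · rw [if_neg (fun h => hy (Prod.ext h.2.2.1 h.2.2.2)),
        if_neg (fun (h : _ ∧ _) => hy h.2)]
  · rw [if_neg (fun h => hx (Prod.ext h.1 h.2.1)),
      if_neg (fun (h : _ ∧ _) => hx h.1)]

/-- The diagonal comparison state (Choi matrix of the pinching channel). -/
private def DeltaMat (d : ℕ) :
    Matrix ((Fin d × Fin 2) × (Fin d × Fin 2)) ((Fin d × Fin 2) × (Fin d × Fin 2)) ℂ :=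
  Matrix.of fun x y =>
    if x.2 = x.1 ∧ y.2 = y.1 ∧ x.1 = y.1 then 1 / (2 * (d : ℂ)) else 0

private lemma delta_gram (d : ℕ) (hd : d ≠ 0) :
    (2 : ℂ) • DeltaMat d = (Wsgn d 0)ᴴ * Wsgn d 0 + (Wsgn d 1)ᴴ * Wsgn d 1 := by
  ext x y
  rw [Matrix.add_apply, Wsgn_gram d hd 0, Wsgn_gram d hd 1, Matrix.smul_apply, DeltaMat,
    Matrix.of_apply]
  by_cases hxy : x.2 = x.1 ∧ y.2 = y.1
  · rw [if_pos hxy, if_pos hxy]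
    obtain ⟨x1, x2⟩ := x
    obtain ⟨y1, y2⟩ := y
    obtain ⟨i, j⟩ := x1
    obtain ⟨k, l⟩ := y1
    by_cases hjl : j = l
    · subst hjl
      rw [flowerU_mul hd j, Matrix.one_apply]
      by_cases hik : k = i
      · subst hik
        rw [if_pos rfl, if_pos ⟨hxy.1, hxy.2, rfl⟩]
        simp only [smul_eq_mul]
        fin_cases j <;> norm_num <;> ring
      · rw [if_neg hik, if_neg (fun h => hik (congrArg Prod.fst h.2.2).symm)]
        simp
    · rw [if_neg (fun h => hjl (congrArg Prod.snd h.2.2))]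
      simp only [smul_eq_mul, mul_zero, zero_mul]
      fin_cases j <;> fin_cases l <;> simp_all <;> ring
  · rw [if_neg hxy, if_neg hxy, if_neg (by tauto)]
    simp

end FlowerGram




noncomputable section FlowerChannelMain

open Matrix Complex

private lemma sum_swap4 {α β γ δ M : Type*} [AddCommMonoid M]
    [Fintype α] [Fintype β] [Fintype γ] [Fintype δ] (f : α → β → γ → δ → M) :
    ∑ a, ∑ b, ∑ c, ∑ e, f a b c e = ∑ c, ∑ e, ∑ a, ∑ b, f a b c e :=
  calc ∑ a, ∑ b, ∑ c, ∑ e, f a b c e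
      = ∑ a, ∑ c, ∑ b, ∑ e, f a b c e :=
        Finset.sum_congr rfl fun a _ => Finset.sum_comm
    _ = ∑ c, ∑ a, ∑ b, ∑ e, f a b c e := Finset.sum_comm
    _ = ∑ c, ∑ a, ∑ e, ∑ b, f a b c e :=
        Finset.sum_congr rfl fun c _ => Finset.sum_congr rfl fun a _ => Finset.sum_comm
    _ = ∑ c, ∑ e, ∑ a, ∑ b, f a b c e :=
        Finset.sum_congr rfl fun c _ => Finset.sum_comm

private def pinch {B : Type*} [DecidableEq B] (X : Matrix B B ℂ) : Matrix B B ℂ :=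
  Matrix.of fun b b' => if b = b' then X b b else 0

private lemma pinch_isLinear {B : Type*} [DecidableEq B] :
    IsLinearMap ℂ (pinch (B := B)) := by
  constructor
  · intro X Y
    ext b b'
    simp only [pinch, Matrix.of_apply, Matrix.add_apply]
    split <;> simp
  · intro c X
    ext b b'
    simp only [pinch, Matrix.of_apply, Matrix.smul_apply]
    split <;> simp

private lemma apply_eq_choi {A B : Type*} [Fintype A] [Fintype B] [DecidableEq A] [Nonempty A]
    {L : Matrix A A ℂ → Matrix B B ℂ} (hL : IsLinearMap ℂ L) (X : Matrix A A ℂ) (b b' : B) :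
    L X b b'
      = ∑ a : A, ∑ a' : A, X a a' * ((Fintype.card A : ℂ) * choi L (a, b) (a', b')) := by
  have hcard : ((Fintype.card A : ℕ) : ℂ) ≠ 0 := Nat.cast_ne_zero.mpr Fintype.card_ne_zero
  have hchoi : ∀ a a' : A, ((Fintype.card A : ℕ) : ℂ) * choi L (a, b) (a', b')
      = L (Matrix.single a a' 1) b b' := by
    intro a a'
    simp only [choi, Matrix.of_apply]
    rw [← mul_assoc, mul_inv_cancel₀ hcard, one_mul]
  let l : Matrix A A ℂ →ₗ[ℂ] Matrix B B ℂ := IsLinearMap.mk' L hL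
  have hl : ∀ Y, L Y = l Y := fun _ => rfl
  calc L X b b' = l (∑ i : A, ∑ j : A, Matrix.single i j (X i j)) b b' := by
        rw [← hl, ← Matrix.matrix_eq_sum_single X]
    _ = ∑ i : A, ∑ j : A, l (Matrix.single i j (X i j)) b b' := by
        rw [map_sum, Matrix.sum_apply]
        refine Finset.sum_congr rfl fun i _ => ?_
        rw [map_sum, Matrix.sum_apply]
    _ = ∑ i : A, ∑ j : A, X i j * ((Fintype.card A : ℂ) * choi L (i, b) (j, b')) := by
        refine Finset.sum_congr rfl fun i _ => Finset.sum_congr rfl fun j _ => ?_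
        rw [hchoi, ← hl]
        have hstd : Matrix.single i j (X i j) = X i j • Matrix.single i j 1 := by
          rw [Matrix.smul_single, smul_eq_mul, mul_one]
        rw [hstd, hL.map_smul, Matrix.smul_apply, smul_eq_mul]

open scoped MatrixOrder in
private lemma psd_ct_mul_self {n : Type*} [Fintype n] {A : Matrix n n ℂ} (h : A.PosSemidef) :
    ∃ B : Matrix n n ℂ, A = Bᴴ * B := by
  classical
  refine ⟨CFC.sqrt A, ?_⟩
  have hs : IsSelfAdjoint (CFC.sqrt A) := (CFC.sqrt_nonneg A).isSelfAdjoint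
  rw [← star_eq_conjTranspose, hs.star_eq, CFC.sqrt_mul_sqrt_self A h.nonneg]

private lemma cp_applyRight {R A B : Type*} [Fintype R] [Fintype A] [Fintype B]
    [DecidableEq A] [Nonempty A]
    {L : Matrix A A ℂ → Matrix B B ℂ} (hL : IsLinearMap ℂ L) (hC : (choi L).PosSemidef)
    {ρ : Matrix (R × A) (R × A) ℂ} (hρ : ρ.PosSemidef) :
    (applyRight L ρ).PosSemidef := by
  obtain ⟨M, hM⟩ := psd_ct_mul_self hρ
  obtain ⟨N, hN⟩ := psd_ct_mul_self hC
  set c : ℂ := ((Real.sqrt (Fintype.card A) : ℝ) : ℂ) with hcdef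
  have hcc : c * c = ((Fintype.card A : ℕ) : ℂ) :=
    ofReal_sqrt_mul_self' (Nat.cast_nonneg _)
  have hcstar : star c = c := by rw [hcdef]; exact Complex.conj_ofReal _
  set K : Matrix ((R × A) × (A × B)) (R × B) ℂ :=
    Matrix.of fun u y => c * ∑ a : A, M u.1 (y.1, a) * N u.2 (a, y.2) with hKdef
  have key : applyRight L ρ = Kᴴ * K := by
    ext x y
    rw [applyRight, Matrix.of_apply, apply_eq_choi hL, Matrix.mul_apply,
      Fintype.sum_prod_type]
    simp only [Matrix.of_apply, hM, hN, Matrix.mul_apply, Matrix.conjTranspose_apply,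
      star_mul', star_sum, hcstar, Finset.sum_mul, Finset.mul_sum, hKdef]
    rw [sum_swap4 (fun (a : A) (a' : A) (t : A × B) (s : R × A) =>
      star (M s (x.1, a)) * M s (y.1, a') * ((Fintype.card A : ℂ)
        * (star (N t (a, x.2)) * N t (a', y.2)))), Finset.sum_comm]
    refine Finset.sum_congr rfl fun s _ => Finset.sum_congr rfl fun t _ =>
      Finset.sum_comm.trans
        (Finset.sum_congr rfl fun a' _ => Finset.sum_congr rfl fun a _ => ?_)
    rw [← hcc]
    ring
  rw [key]
  exact Matrix.posSemidef_conjTranspose_mul_self K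

private lemma choi_two_smul_sub {A B : Type*} [Fintype A] [DecidableEq A]
    (P T : Matrix A A ℂ → Matrix B B ℂ) :
    choi (fun X => (2 : ℂ) • P X - T X) = (2 : ℂ) • choi P - choi T := by
  ext x y
  simp only [choi, Matrix.of_apply, Matrix.sub_apply, Matrix.smul_apply, smul_eq_mul]
  ring

private lemma choi_pinch (d : ℕ) (hd : d ≠ 0) :
    choi (pinch (B := Fin d × Fin 2)) = DeltaMat d := by
  ext x y
  obtain ⟨a, b⟩ := x
  obtain ⟨a', b'⟩ := y
  simp only [choi, Matrix.of_apply, pinch, DeltaMat]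
  by_cases hD : b = a ∧ b' = a' ∧ a = a'
  · obtain ⟨h1, h2, h3⟩ := hD
    subst h1
    subst h2
    subst h3
    simp [Matrix.single, Fintype.card_prod]
    push_cast
    ring
  · rw [if_neg hD]
    simp only [Matrix.single, Matrix.of_apply]
    by_cases h1 : b = b'
    · by_cases h2 : a = b ∧ a' = b
      · exact absurd ⟨h2.1.symm, h1.symm.trans h2.2.symm, h2.1.trans h2.2.symm⟩ hD
      · subst h1
        simp [h2]
    · simp [h1]

private lemma trace_pres {d : ℕ} (hd : 2 ≤ d)
    {T : Matrix (Fin d × Fin 2) (Fin d × Fin 2) ℂ → Matrix (Fin d × Fin 2) (Fin d × Fin 2) ℂ}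
    (hlin : IsLinearMap ℂ T) (hchoi : choi T = flowerState d) (X : Matrix (Fin d × Fin 2) (Fin d × Fin 2) ℂ) :
    (T X).trace = X.trace := by
  have hd0 : d ≠ 0 := by omega
  have hA : Nonempty (Fin d × Fin 2) := ⟨(⟨0, by omega⟩, 0)⟩
  have hdc : ((d : ℂ)) ≠ 0 := Nat.cast_ne_zero.mpr hd0
  have hinner : ∀ a a' : Fin d × Fin 2,
      ((Fintype.card (Fin d × Fin 2) : ℕ) : ℂ) * ∑ p : Fin d × Fin 2, choi T (a, p) (a', p)
        = if a' = a then 1 else 0 := by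
    intro a a'
    rw [hchoi]
    by_cases haa : a' = a
    · subst haa
      rw [if_pos rfl, Finset.sum_eq_single a']
      · rw [flowerState, Matrix.of_apply, if_pos ⟨rfl, rfl, rfl, rfl⟩,
          flowerU_mul hd0, Matrix.one_apply_eq]
        rw [Fintype.card_prod, Fintype.card_fin, Fintype.card_fin]
        push_cast
        field_simp
      · intro p _ hpa
        rw [flowerState, Matrix.of_apply, if_neg (fun h => hpa (Prod.ext h.1 h.2.1))]
      · intro h
        exact absurd (Finset.mem_univ a') h
    · rw [if_neg haa, Finset.sum_eq_zero, mul_zero]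
      intro p _
      rw [flowerState, Matrix.of_apply,
        if_neg (fun h => haa (((Prod.ext h.2.2.1 h.2.2.2 : p = a').symm).trans
          (Prod.ext h.1 h.2.1)))]
  rw [Matrix.trace, Matrix.trace]
  simp only [Matrix.diag]
  calc ∑ p : Fin d × Fin 2, T X p p
      = ∑ p : Fin d × Fin 2, ∑ a, ∑ a',
          X a a' * ((Fintype.card (Fin d × Fin 2) : ℂ) * choi T (a, p) (a', p)) :=
        Finset.sum_congr rfl fun p _ => apply_eq_choi hlin X p p
    _ = ∑ a, ∑ a', ∑ p : Fin d × Fin 2,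
          X a a' * ((Fintype.card (Fin d × Fin 2) : ℂ) * choi T (a, p) (a', p)) :=
        Finset.sum_comm.trans (Finset.sum_congr rfl fun a _ => Finset.sum_comm)
    _ = ∑ a, ∑ a', X a a' * (if a' = a then 1 else 0) := by
        refine Finset.sum_congr rfl fun a _ => Finset.sum_congr rfl fun a' _ => ?_
        rw [← Finset.mul_sum, ← Finset.mul_sum, hinner]
    _ = ∑ a, X a a := by
        refine Finset.sum_congr rfl fun a _ => ?_
        simp
end FlowerChannelMain
noncomputable section FlowerSep

open Matrix Complex

private lemma psd_trace_aux {n : Type*} [Fintype n] {M : Matrix n n ℂ} (h : M.PosSemidef) :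
    ∃ t : ℝ, 0 ≤ t ∧ M.trace = (t : ℂ) ∧ (t = 0 → M = 0) := by
  classical
  obtain ⟨B, hB⟩ := psd_ct_mul_self h
  refine ⟨∑ j, ∑ i, Complex.normSq (B i j),
    Finset.sum_nonneg fun _ _ => Finset.sum_nonneg fun _ _ => Complex.normSq_nonneg _, ?_, ?_⟩
  · rw [hB, Matrix.trace]
    push_cast
    refine Finset.sum_congr rfl fun j _ => ?_
    simp only [Matrix.diag]
    rw [Matrix.mul_apply]
    refine Finset.sum_congr rfl fun i _ => ?_
    rw [Matrix.conjTranspose_apply, Complex.star_def, mul_comm, Complex.mul_conj]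
  · intro ht
    have hB0 : B = 0 := by
      ext i j
      have h1 : ∀ j' ∈ (Finset.univ : Finset n), (0:ℝ) ≤ ∑ i', Complex.normSq (B i' j') :=
        fun _ _ => Finset.sum_nonneg fun _ _ => Complex.normSq_nonneg _
      have h2 := (Finset.sum_eq_zero_iff_of_nonneg h1).mp ht j (Finset.mem_univ j)
      have h3 := (Finset.sum_eq_zero_iff_of_nonneg
        (fun _ _ => Complex.normSq_nonneg _)).mp h2 i (Finset.mem_univ i)
      simpa using Complex.normSq_eq_zero.mp h3
    rw [hB, hB0]
    simp

private lemma stdBasis_state {R : Type*} [Fintype R] [DecidableEq R] (r0 : R) :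
    IsState (Matrix.single r0 r0 (1:ℂ)) := by
  constructor
  · have hH : (Matrix.single r0 r0 (1:ℂ))ᴴ = Matrix.single r0 r0 1 := by
      ext i j
      simp only [Matrix.conjTranspose_apply, Matrix.single, Matrix.of_apply,
        apply_ite (star : ℂ → ℂ), star_one, star_zero]
      exact if_congr and_comm rfl rfl
    have hmul : Matrix.single r0 r0 (1:ℂ)
        = (Matrix.single r0 r0 (1:ℂ))ᴴ * Matrix.single r0 r0 (1:ℂ) := by
      rw [hH, Matrix.single_mul_single_same, mul_one]
    rw [hmul]
    exact Matrix.posSemidef_conjTranspose_mul_self _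
  · rw [Matrix.trace]
    simp [Matrix.diag, Matrix.single]

private lemma sep_pinch {R A : Type*} [Fintype R] [Fintype A] [DecidableEq A] [DecidableEq R]
    {ρ : Matrix (R × A) (R × A) ℂ} (hρ : IsState ρ) :
    IsSepState (applyRight (pinch (B := A)) ρ) := by
  classical
  obtain ⟨hPSD, htr⟩ := hρ
  have hR : Nonempty R := by
    by_contra hR
    rw [not_nonempty_iff] at hR
    have he : IsEmpty (R × A) := ⟨fun p => hR.false p.1⟩
    rw [Matrix.trace, Finset.univ_eq_empty, Finset.sum_empty] at htr
    exact one_ne_zero htr.symm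
  obtain ⟨r0⟩ := hR
  set blk : A → Matrix R R ℂ := fun b => Matrix.of fun r r' => ρ (r, b) (r', b) with hblk
  have hblkPSD : ∀ b, (blk b).PosSemidef := by
    intro b
    refine Matrix.PosSemidef.of_dotProduct_mulVec_nonneg ?_ ?_
    · ext r r'
      simp only [hblk, Matrix.conjTranspose_apply, Matrix.of_apply]
      exact hPSD.1.apply (r, b) (r', b)
    · intro x
      have hq := hPSD.dotProduct_mulVec_nonneg (fun p : R × A => if p.2 = b then x p.1 else 0)
      have hqe : star (fun p : R × A => if p.2 = b then x p.1 else 0) ⬝ᵥ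
          ρ.mulVec (fun p : R × A => if p.2 = b then x p.1 else 0)
          = star x ⬝ᵥ (blk b).mulVec x := by
        simp only [dotProduct, Matrix.mulVec, Pi.star_apply, Fintype.sum_prod_type,
          hblk, Matrix.of_apply]
        simp [apply_ite (star : ℂ → ℂ), ite_mul, mul_ite, mul_zero, zero_mul,
          star_zero, Finset.sum_ite_eq, Finset.sum_ite_eq']
      rw [← hqe]
      exact hq
  choose t ht0 htt htM using fun b => psd_trace_aux (hblkPSD b)
  have hsumc : ∑ b : A, ((t b : ℝ) : ℂ) = 1 := by
    calc ∑ b : A, ((t b : ℝ) : ℂ) = ∑ b : A, (blk b).trace :=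
          Finset.sum_congr rfl fun b _ => (htt b).symm
      _ = ∑ b : A, ∑ r : R, ρ (r, b) (r, b) := by
          refine Finset.sum_congr rfl fun b _ => ?_
          rw [Matrix.trace]
          refine Finset.sum_congr rfl fun r _ => ?_
          simp [Matrix.diag, hblk]
      _ = ρ.trace := by
          rw [Matrix.trace]
          simp only [Matrix.diag, Fintype.sum_prod_type]
          exact Finset.sum_comm
      _ = 1 := htr
  have hsum : ∑ b : A, t b = 1 := by
    have h1 : ((∑ b : A, t b : ℝ) : ℂ) = 1 := by push_cast; exact hsumc
    exact_mod_cast h1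
  set e := Fintype.equivFin A with he
  have hdecA : applyRight (pinch (B := A)) ρ
      = ∑ b : A, ((t b : ℝ) : ℂ) •
          ((if hz : t b = 0 then Matrix.single r0 r0 1
            else ((t b : ℂ))⁻¹ • blk b) ⊗ₖ Matrix.single b b 1) := by
    ext x y
    obtain ⟨x1, x2⟩ := x
    obtain ⟨y1, y2⟩ := y
    rw [Matrix.sum_apply]
    simp only [Matrix.smul_apply, Matrix.kroneckerMap_apply, smul_eq_mul]
    rw [applyRight, Matrix.of_apply]
    simp only [pinch, Matrix.of_apply]
    by_cases hcc : x2 = y2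
    · subst hcc
      rw [if_pos rfl, Finset.sum_eq_single x2]
      · rw [Matrix.single_apply_same]
        by_cases hz : t x2 = 0
        · rw [dif_pos hz]
          have hb0 : ρ (x1, x2) (y1, x2) = 0 := by
            have h4 := congrFun (congrFun (htM x2 hz) x1) y1
            simpa [hblk] using h4
          rw [hb0, hz]
          simp
        · have htc : ((t x2 : ℝ) : ℂ) ≠ 0 := by exact_mod_cast hz
          rw [dif_neg hz, Matrix.smul_apply, smul_eq_mul, mul_one]
          have hbe : blk x2 x1 y1 = ρ (x1, x2) (y1, x2) := by simp [hblk]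
          rw [hbe, ← mul_assoc, mul_inv_cancel₀ htc, one_mul]
      · intro b _ hb
        simp [Matrix.single, hb]
      · intro h
        exact absurd (Finset.mem_univ _) h
    · rw [if_neg hcc]
      refine (Finset.sum_eq_zero fun b _ => ?_).symm
      simp only [Matrix.single, Matrix.of_apply,
        if_neg (fun h : b = x2 ∧ b = y2 => hcc (h.1.symm.trans h.2))]
      ring
  refine ⟨Fintype.card A, fun i => t (e.symm i),
    fun i => if hz : t (e.symm i) = 0 then Matrix.single r0 r0 1
      else ((t (e.symm i) : ℂ))⁻¹ • blk (e.symm i),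
    fun i => Matrix.single (e.symm i) (e.symm i) 1,
    fun i => ht0 _, ?_, ?_, fun i => stdBasis_state _, ?_⟩
  · rw [Equiv.sum_comp e.symm (fun b => t b)]
    exact hsum
  · intro i
    dsimp only
    by_cases hz : t (e.symm i) = 0
    · rw [dif_pos hz]
      exact stdBasis_state r0
    · rw [dif_neg hz]
      have htc : ((t (e.symm i) : ℝ) : ℂ) ≠ 0 := by exact_mod_cast hz
      refine ⟨Matrix.PosSemidef.of_dotProduct_mulVec_nonneg ?_ ?_, ?_⟩
      · have hH := (hblkPSD (e.symm i)).1
        unfold Matrix.IsHermitian at hH ⊢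
        rw [Matrix.conjTranspose_smul, hH, ← Complex.ofReal_inv, Complex.star_def,
          Complex.conj_ofReal]
      · intro x
        rw [Matrix.smul_mulVec, dotProduct_smul, smul_eq_mul]
        refine mul_nonneg ?_ ((hblkPSD (e.symm i)).dotProduct_mulVec_nonneg x)
        rw [← Complex.ofReal_inv]
        exact Complex.zero_le_real.mpr (inv_nonneg.mpr (ht0 _))
      · rw [Matrix.trace_smul, htt, smul_eq_mul, inv_mul_cancel₀ htc]
  · rw [hdecA]
    exact (Equiv.sum_comp e.symm _).symm

end FlowerSep


/-- **Flower-channel bound**: the linear map `T_f` whose Choi matrix is the flower state `ρ^f`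
is a quantum channel with `E_max(T_f) ≤ 2`. -/

theorem flower_channel_bound
    (d : ℕ) (hd : 2 ≤ d)
    (T : Matrix (Fin d × Fin 2) (Fin d × Fin 2) ℂ → Matrix (Fin d × Fin 2) (Fin d × Fin 2) ℂ)
    (hlin : IsLinearMap ℂ T) (hchoi : choi T = flowerState d) :
    IsQChannel T ∧ EmaxChan T ≤ ((2 : ℝ) : EReal) := by
  have hd0 : d ≠ 0 := by omega
  have hA : Nonempty (Fin d × Fin 2) := ⟨(⟨0, by omega⟩, 0)⟩
  have hPSDflower : (flowerState d).PosSemidef := by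
    rw [flower_gram d hd0]
    exact Matrix.posSemidef_conjTranspose_mul_self _
  refine ⟨⟨hlin, fun X => trace_pres hd hlin hchoi X, by rw [hchoi]; exact hPSDflower⟩, ?_⟩
  rw [EmaxChan]
  refine iSup_le fun dR => iSup_le fun ρs => ?_
  set ρ := (ρs : Matrix (Fin dR × (Fin d × Fin 2)) (Fin dR × (Fin d × Fin 2)) ℂ) with hρdef
  have hρ : IsState ρ := ρs.2
  set σ := applyRight (pinch (B := Fin d × Fin 2)) ρ with hσdef
  have hsep : IsSepState σ := sep_pinch hρ
  have hpsd : (((2 : ℝ)) • σ - applyRight T ρ).PosSemidef := by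
    have hPlin := pinch_isLinear (B := Fin d × Fin 2)
    have hLlin : IsLinearMap ℂ (fun X : Matrix (Fin d × Fin 2) (Fin d × Fin 2) ℂ =>
        (2 : ℂ) • pinch X - T X) := by
      constructor
      · intro X Y
        rw [hPlin.map_add, hlin.map_add]
        ext i j
        simp only [Matrix.sub_apply, Matrix.smul_apply, Matrix.add_apply, smul_eq_mul]
        ring
      · intro c X
        rw [hPlin.map_smul, hlin.map_smul]
        ext i j
        simp only [Matrix.sub_apply, Matrix.smul_apply, smul_eq_mul]
        ring
    have hchoiL : (choi (fun X : Matrix (Fin d × Fin 2) (Fin d × Fin 2) ℂ =>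
        (2 : ℂ) • pinch X - T X)).PosSemidef := by
      rw [choi_two_smul_sub, choi_pinch d hd0, hchoi, delta_gram d hd0, flower_gram d hd0,
        add_sub_cancel_left]
      exact Matrix.posSemidef_conjTranspose_mul_self _
    have heq : ((2 : ℝ)) • σ - applyRight T ρ
        = applyRight (fun X => (2 : ℂ) • pinch X - T X) ρ := by
      ext x y
      simp only [hσdef, Matrix.sub_apply, Matrix.smul_apply, applyRight, Matrix.of_apply,
        smul_eq_mul, Complex.real_smul]
      push_cast
      ring
    rw [heq]
    exact cp_applyRight hLlin hchoiL hρ.1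
  have hlogb : Real.logb 2 2 = 1 := Real.logb_self_eq_one (by norm_num)
  have h1 : EmaxState (applyRight T ρ) ≤ Dmax (applyRight T ρ) σ :=
    iInf_le (fun σ' : {σ' : Matrix (Fin dR × (Fin d × Fin 2)) (Fin dR × (Fin d × Fin 2)) ℂ //
        IsSepState σ'} =>
      Dmax (applyRight T ρ)
        (σ' : Matrix (Fin dR × (Fin d × Fin 2)) (Fin dR × (Fin d × Fin 2)) ℂ)) ⟨σ, hsep⟩
  have h2 : Dmax (applyRight T ρ) σ ≤ ((Real.logb 2 (2 : ℝ) : ℝ) : EReal) :=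
    iInf_le (fun c : {c : ℝ // 0 < c ∧ ((c : ℝ) • σ - applyRight T ρ).PosSemidef} =>
      ((Real.logb 2 (c : ℝ) : ℝ) : EReal)) ⟨2, by norm_num, hpsd⟩
  refine le_trans (le_trans h1 h2) ?_
  rw [hlogb]
  exact EReal.coe_le_coe_iff.mpr (by norm_num)
end
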